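/- arXiv:0805.1618 — 4 statements merged into one kernel-verified Lean document; each statement's English description precedes it below -/
import Mathlib

section
/- Let Λ = (λ_0,…,λ_n) ∈ ℂ^{n+1} and let a ≠ b be real numbers. Then the following are equivalent: (a) there exists a Bernstein basis p_{n,k}, k = 0,…,n, of E_Λ for {a,b}; (b) E_Λ is an extended Chebyshev system for the two-point set {a,b}; (c) Φ_{n,k}(b−a) ≠ 0 for every k = 0,…,n. -/
open Filter Topology Set

noncomputable section

/-- The differential operator `(d/dx − λ₀)⋯(d/dx − λₙ)` applied to `f`,
where `λ₀,…,λₙ` are the entries of the list. -/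
def LOp : List ℂ → (ℝ → ℂ) → (ℝ → ℂ)
  | [], f => f
  | c :: r, f => LOp r (fun x => deriv f x - c * f x)

/-- The space `E_Λ` of exponential polynomials with eigenvalue vector `l`. -/
def ExpPoly (l : List ℂ) : Set (ℝ → ℂ) :=
  {f | ContDiff ℝ (⊤ : ℕ∞) f ∧ LOp l f = 0}

/-- `f` has a zero of order (multiplicity) exactly `k` at `x₀`. -/
def HasZeroOfOrder (f : ℝ → ℂ) (x₀ : ℝ) (k : ℕ) : Prop :=
  (∀ j < k, iteratedDeriv j f x₀ = 0) ∧ iteratedDeriv k f x₀ ≠ 0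

/-- `E_l` (with `l.length = n + 1`) is an extended Chebyshev system for `A ⊆ ℝ`:
every nonzero member has at most `n` zeros in `A`, counted with multiplicity. -/
def IsExtChebyshev (l : List ℂ) (A : Set ℝ) : Prop :=
  ∀ f ∈ ExpPoly l, f ≠ 0 → ∀ (s : Finset ℝ) (m : ℝ → ℕ),
    (↑s : Set ℝ) ⊆ A → (∀ x ∈ s, ∀ j < m x, iteratedDeriv j f x = 0) →
    ∑ x ∈ s, m x ≤ l.length - 1

/-- `p k`, `k = 0,…,n` (with `l.length = n + 1`) is the normalized Bernstein basis of
`E_l` for the points `a ≠ b`: `p k` lies in `E_l`, has a zero of order exactly `k`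
at `a`, a zero of order exactly `n − k` at `b`, and `(p k)^{(k)}(a) = 1`. -/
def IsBernsteinBasis (l : List ℂ) (a b : ℝ) (p : ℕ → ℝ → ℂ) : Prop :=
  ∀ k ≤ l.length - 1,
    p k ∈ ExpPoly l ∧ HasZeroOfOrder (p k) a k ∧
      HasZeroOfOrder (p k) b (l.length - 1 - k) ∧ iteratedDeriv k (p k) a = 1

/-- `E_l` is closed under (pointwise) complex conjugation. -/
def ConjClosed (l : List ℂ) : Prop :=
  ∀ f ∈ ExpPoly l, (fun x => starRingEnd ℂ (f x)) ∈ ExpPoly l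

section basic
variable {f g : ℝ → ℂ} {c : ℂ} {l : List ℂ}

lemma smooth_deriv (hf : ContDiff ℝ (⊤ : ℕ∞) f) : ContDiff ℝ (⊤ : ℕ∞) (deriv f) :=
  (contDiff_infty_iff_deriv.mp hf).2

lemma smooth_diff (hf : ContDiff ℝ (⊤ : ℕ∞) f) : Differentiable ℝ f :=
  (contDiff_infty_iff_deriv.mp hf).1

lemma smooth_step (hf : ContDiff ℝ (⊤ : ℕ∞) f) (c : ℂ) :
    ContDiff ℝ (⊤ : ℕ∞) (fun x => deriv f x - c * f x) :=
  (smooth_deriv hf).sub (contDiff_const.mul hf)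

lemma LOp_smooth (l : List ℂ) (hf : ContDiff ℝ (⊤ : ℕ∞) f) : ContDiff ℝ (⊤ : ℕ∞) (LOp l f) := by
  induction l generalizing f with
  | nil => exact hf
  | cons c r ih => exact ih (smooth_step hf c)

lemma LOp_zero (l : List ℂ) : LOp l (0 : ℝ → ℂ) = 0 := by
  induction l with
  | nil => rfl
  | cons c r ih =>
      show LOp r _ = 0
      have : (fun x => deriv (0 : ℝ → ℂ) x - c * (0:ℝ→ℂ) x) = (0 : ℝ → ℂ) := by
        funext x; simp [Pi.zero_def]
      rw [this, ih]

lemma LOp_add (l : List ℂ) (hf : ContDiff ℝ (⊤ : ℕ∞) f) (hg : ContDiff ℝ (⊤ : ℕ∞) g) :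
    LOp l (fun x => f x + g x) = fun x => LOp l f x + LOp l g x := by
  induction l generalizing f g with
  | nil => rfl
  | cons c r ih =>
      show LOp r _ = _
      have h1 : (fun x => deriv (fun y => f y + g y) x - c * (f x + g x))
          = fun x => (deriv f x - c * f x) + (deriv g x - c * g x) := by
        funext x
        rw [deriv_fun_add ((smooth_diff hf) x) ((smooth_diff hg) x)]
        ring
      rw [h1, ih (smooth_step hf c) (smooth_step hg c)]
      rfl

lemma LOp_cmul (l : List ℂ) (a : ℂ) (hf : ContDiff ℝ (⊤ : ℕ∞) f) :
    LOp l (fun x => a * f x) = fun x => a * LOp l f x := by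
  induction l generalizing f with
  | nil => rfl
  | cons c r ih =>
      show LOp r _ = _
      have h1 : (fun x => deriv (fun y => a * f y) x - c * (a * f x))
          = fun x => a * (deriv f x - c * f x) := by
        funext x
        rw [deriv_const_mul a ((smooth_diff hf) x)]
        ring
      rw [h1, ih (smooth_step hf c)]
      rfl

lemma ExpPoly.zero_mem (l : List ℂ) : (0 : ℝ → ℂ) ∈ ExpPoly l :=
  ⟨contDiff_const, LOp_zero l⟩

lemma ExpPoly.add_mem (hf : f ∈ ExpPoly l) (hg : g ∈ ExpPoly l) :
    (fun x => f x + g x) ∈ ExpPoly l := by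
  refine ⟨hf.1.add hg.1, ?_⟩
  rw [LOp_add l hf.1 hg.1, hf.2, hg.2]
  funext x; simp [Pi.zero_def]

lemma ExpPoly.cmul_mem (a : ℂ) (hf : f ∈ ExpPoly l) : (fun x => a * f x) ∈ ExpPoly l := by
  refine ⟨contDiff_const.mul hf.1, ?_⟩
  rw [LOp_cmul l a hf.1, hf.2]
  funext x; simp [Pi.zero_def]

lemma ExpPoly.sub_mem (hf : f ∈ ExpPoly l) (hg : g ∈ ExpPoly l) :
    (fun x => f x - g x) ∈ ExpPoly l := by
  have := ExpPoly.add_mem hf (ExpPoly.cmul_mem (-1) hg)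
  simpa [sub_eq_add_neg] using this

lemma ExpPoly.sum_mem {ι : Type*} (s : Finset ι) (F : ι → ℝ → ℂ)
    (h : ∀ i ∈ s, F i ∈ ExpPoly l) : (fun x => ∑ i ∈ s, F i x) ∈ ExpPoly l := by
  classical
  induction s using Finset.induction_on with
  | empty => simpa [Pi.zero_def] using ExpPoly.zero_mem l
  | insert i t hni ih =>
      have h1 : (fun x => ∑ j ∈ insert i t, F j x) = fun x => F i x + ∑ j ∈ t, F j x := by
        funext x; rw [Finset.sum_insert hni]
      rw [h1]
      exact ExpPoly.add_mem (h i (Finset.mem_insert_self i t))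
        (ih fun j hj => h j (Finset.mem_insert_of_mem hj))

end basic

section basic2
variable {f g : ℝ → ℂ} {c : ℂ} {l : List ℂ}

lemma LOp_deriv (l : List ℂ) (hf : ContDiff ℝ (⊤ : ℕ∞) f) :
    LOp l (deriv f) = deriv (LOp l f) := by
  induction l generalizing f with
  | nil => rfl
  | cons c r ih =>
      show LOp r _ = deriv (LOp r _)
      have h1 : (fun x => deriv (deriv f) x - c * deriv f x)
          = deriv (fun x => deriv f x - c * f x) := by
        funext x
        rw [deriv_fun_sub ((smooth_diff (smooth_deriv hf)) x)
          (((smooth_diff hf) x).const_mul c)]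
        rw [deriv_const_mul c ((smooth_diff hf) x)]
      rw [h1, ih (smooth_step hf c)]

lemma LOp_shift (l : List ℂ) (t : ℝ) (f : ℝ → ℂ) :
    LOp l (fun x => f (x + t)) = fun x => LOp l f (x + t) := by
  induction l generalizing f with
  | nil => rfl
  | cons c r ih =>
      show LOp r _ = _
      have h1 : (fun x => deriv (fun y => f (y + t)) x - c * f (x + t))
          = fun x => (fun y => deriv f y - c * f y) (x + t) := by
        funext x
        rw [deriv_comp_add_const]
      rw [h1, ih (fun y => deriv f y - c * f y)]
      rfl

lemma ExpPoly.deriv_mem (hf : f ∈ ExpPoly l) : deriv f ∈ ExpPoly l := by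
  refine ⟨smooth_deriv hf.1, ?_⟩
  rw [LOp_deriv l hf.1, hf.2]
  funext x; simp [Pi.zero_def, deriv_const]

lemma ExpPoly.iteratedDeriv_mem (j : ℕ) (hf : f ∈ ExpPoly l) : iteratedDeriv j f ∈ ExpPoly l := by
  induction j with
  | zero => simpa [iteratedDeriv_zero] using hf
  | succ j ih => rw [iteratedDeriv_succ]; exact ExpPoly.deriv_mem ih

lemma ExpPoly.shift_mem (t : ℝ) (hf : f ∈ ExpPoly l) : (fun x => f (x + t)) ∈ ExpPoly l := by
  refine ⟨hf.1.comp (contDiff_id.add contDiff_const), ?_⟩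
  rw [LOp_shift l t f, hf.2]
  funext x; simp [Pi.zero_def]

end basic2

section iterD
variable {f g : ℝ → ℂ}

lemma iterD_sub (j : ℕ) (hf : ContDiff ℝ (⊤ : ℕ∞) f) (hg : ContDiff ℝ (⊤ : ℕ∞) g) (x : ℝ) :
    iteratedDeriv j (fun y => f y - g y) x = iteratedDeriv j f x - iteratedDeriv j g x := by
  have hf' : ContDiffOn ℝ j f Set.univ := (hf.of_le (by exact_mod_cast le_top)).contDiffOn
  have hg' : ContDiffOn ℝ j g Set.univ := (hg.of_le (by exact_mod_cast le_top)).contDiffOn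
  have := iteratedDerivWithin_sub (Set.mem_univ x) uniqueDiffOn_univ (hf' x (Set.mem_univ x)) (hg' x (Set.mem_univ x))
  simpa [iteratedDerivWithin_univ, Pi.sub_def] using this

lemma iterD_cmul (j : ℕ) (a : ℂ) (hf : ContDiff ℝ (⊤ : ℕ∞) f) (x : ℝ) :
    iteratedDeriv j (fun y => a * f y) x = a * iteratedDeriv j f x := by
  have hf' : ContDiffOn ℝ j f Set.univ := (hf.of_le (by exact_mod_cast le_top)).contDiffOn
  have := iteratedDerivWithin_const_smul (Set.mem_univ x) uniqueDiffOn_univ a (hf' x (Set.mem_univ x))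
  simpa [iteratedDerivWithin_univ, Pi.smul_def, smul_eq_mul] using this

lemma iterD_step (j : ℕ) (c : ℂ) (hf : ContDiff ℝ (⊤ : ℕ∞) f) (x : ℝ) :
    iteratedDeriv j (fun y => deriv f y - c * f y) x
      = iteratedDeriv (j + 1) f x - c * iteratedDeriv j f x := by
  rw [iterD_sub j (smooth_deriv hf) (contDiff_const.mul hf) x,
    iterD_cmul j c hf x, iteratedDeriv_succ']

end iterD

section unique
variable {f : ℝ → ℂ} {l : List ℂ}

lemma ode1_zero (c : ℂ) (hf : ContDiff ℝ (⊤ : ℕ∞) f) (x₀ : ℝ)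
    (hode : ∀ x, deriv f x - c * f x = 0) (h0 : f x₀ = 0) : f = 0 := by
  set h : ℝ → ℂ := fun x => Complex.exp (-c * x) * f x with hh
  have hd : ∀ x : ℝ, HasDerivAt h 0 x := by
    intro x
    have h1 : HasDerivAt (fun y : ℝ => -c * (y : ℂ)) (-c * 1) x :=
      (Complex.ofRealCLM.hasDerivAt).const_mul (-c)
    have h2 : HasDerivAt (fun y : ℝ => Complex.exp (-c * (y : ℂ)))
        (Complex.exp (-c * x) * (-c * 1)) x := h1.cexp
    have h3 : HasDerivAt f (deriv f x) x := ((smooth_diff hf) x).hasDerivAt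
    have h4 := h2.fun_mul h3
    have h5 : deriv f x = c * f x := by have := hode x; linear_combination this
    rw [h5] at h4
    have e : Complex.exp (-c * x) * (-c * 1) * f x + Complex.exp (-c * x) * (c * f x) = 0 := by ring
    rw [e] at h4
    exact h4
  have hconst : ∀ x, h x = h x₀ :=
    fun x => is_const_of_deriv_eq_zero (fun y => (hd y).differentiableAt)
      (fun y => (hd y).deriv) x x₀
  funext x
  have := hconst x
  rw [hh] at this
  simp only [h0, mul_zero] at this
  have hexp : Complex.exp (-c * x) ≠ 0 := Complex.exp_ne_zero _
  have : Complex.exp (-c * x) * f x = 0 := this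
  simpa [Pi.zero_apply] using (mul_eq_zero.mp this).resolve_left hexp

lemma expPoly_eq_zero (hf : f ∈ ExpPoly l) (x₀ : ℝ)
    (h0 : ∀ j < l.length, iteratedDeriv j f x₀ = 0) : f = 0 := by
  induction l generalizing f with
  | nil => exact hf.2
  | cons c r ih =>
      have hfs := hf.1
      set g : ℝ → ℂ := fun x => deriv f x - c * f x with hg
      have hgmem : g ∈ ExpPoly r := ⟨smooth_step hfs c, hf.2⟩
      have hg0 : ∀ j < r.length, iteratedDeriv j g x₀ = 0 := by
        intro j hj
        rw [hg]
        rw [iterD_step j c hfs x₀]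
        rw [h0 (j+1) (by simpa using Nat.succ_lt_succ hj), h0 j (lt_trans hj (by simp))]
        ring
      have hgz : g = 0 := ih hgmem hg0
      have hode : ∀ x, deriv f x - c * f x = 0 := fun x => congrFun hgz x
      exact ode1_zero c hfs x₀ hode (by simpa using h0 0 (by simp))
end unique

section more
variable {f g : ℝ → ℂ}

lemma smooth_iterD (j : ℕ) (hf : ContDiff ℝ (⊤ : ℕ∞) f) : ContDiff ℝ (⊤ : ℕ∞) (iteratedDeriv j f) := by
  induction j with
  | zero => simpa [iteratedDeriv_zero] using hf
  | succ j ih => rw [iteratedDeriv_succ]; exact smooth_deriv ih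

lemma iterD_zero_fun (j : ℕ) (x : ℝ) : iteratedDeriv j (fun _ : ℝ => (0:ℂ)) x = 0 := by
  induction j with
  | zero => simp [iteratedDeriv_zero]
  | succ j ih =>
      rw [iteratedDeriv_succ']
      have : deriv (fun _ : ℝ => (0:ℂ)) = fun _ : ℝ => (0:ℂ) := by
        funext y; simp
      rw [this]; exact ih

lemma iterD_add (j : ℕ) (hf : ContDiff ℝ (⊤ : ℕ∞) f) (hg : ContDiff ℝ (⊤ : ℕ∞) g) (x : ℝ) :
    iteratedDeriv j (fun y => f y + g y) x = iteratedDeriv j f x + iteratedDeriv j g x := by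
  have hf' : ContDiffOn ℝ j f Set.univ := (hf.of_le (by exact_mod_cast le_top)).contDiffOn
  have hg' : ContDiffOn ℝ j g Set.univ := (hg.of_le (by exact_mod_cast le_top)).contDiffOn
  have := iteratedDerivWithin_add (Set.mem_univ x) uniqueDiffOn_univ (hf' x (Set.mem_univ x)) (hg' x (Set.mem_univ x))
  simpa [iteratedDerivWithin_univ, Pi.add_def] using this

lemma iterD_iterD (i j : ℕ) (f : ℝ → ℂ) :
    iteratedDeriv i (iteratedDeriv j f) = iteratedDeriv (i + j) f := by
  simp only [iteratedDeriv_eq_iterate]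
  rw [← Function.iterate_add_apply]

lemma iterD_sum {ι : Type} (s : Finset ι) (F : ι → ℝ → ℂ)
    (h : ∀ i ∈ s, ContDiff ℝ (⊤ : ℕ∞) (F i)) (j : ℕ) (x : ℝ) :
    iteratedDeriv j (fun y => ∑ i ∈ s, F i y) x = ∑ i ∈ s, iteratedDeriv j (F i) x := by
  classical
  induction s using Finset.induction_on with
  | empty =>
      simp only [Finset.sum_empty]
      rw [iterD_zero_fun]
  | insert i t hni ih =>
      have hs : ContDiff ℝ (⊤ : ℕ∞) (fun y => ∑ k ∈ t, F k y) :=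
        ContDiff.sum fun k hk => h k (Finset.mem_insert_of_mem hk)
      have h1 : (fun y => ∑ k ∈ insert i t, F k y) = fun y => F i y + ∑ k ∈ t, F k y := by
        funext y; rw [Finset.sum_insert hni]
      rw [h1, iterD_add j (h i (Finset.mem_insert_self i t)) hs x,
        ih (fun k hk => h k (Finset.mem_insert_of_mem hk)), Finset.sum_insert hni]
end more

section ctx
variable (n : ℕ) (l : List ℂ) (a : ℝ) (Φ : ℝ → ℂ)

/-- The linear combination `x ↦ ∑_{j≤n} c j Φ^{(j)}(x-a)`. -/
def Fc (c : ℕ → ℂ) : ℝ → ℂ :=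
  fun x => ∑ j ∈ Finset.range (n+1), c j * iteratedDeriv j Φ (x + (-a))

variable {hld : Unit}

lemma Fc_mem (hΦmem : Φ ∈ ExpPoly l) (c : ℕ → ℂ) : Fc n a Φ c ∈ ExpPoly l := by
  apply ExpPoly.sum_mem
  intro j _
  exact ExpPoly.cmul_mem _ (ExpPoly.shift_mem (-a) (ExpPoly.iteratedDeriv_mem j hΦmem))

lemma Fc_iterD (hΦsm : ContDiff ℝ (⊤ : ℕ∞) Φ) (c : ℕ → ℂ) (i : ℕ) (x : ℝ) :
    iteratedDeriv i (Fc n a Φ c) x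
      = ∑ j ∈ Finset.range (n+1), c j * iteratedDeriv (i + j) Φ (x + (-a)) := by
  have hΦ := hΦsm
  have hsm : ∀ j ∈ Finset.range (n+1),
      ContDiff ℝ (⊤ : ℕ∞) (fun y => c j * iteratedDeriv j Φ (y + (-a))) := by
    intro j _
    exact contDiff_const.mul ((smooth_iterD j hΦ).comp (contDiff_id.add contDiff_const))
  rw [show Fc n a Φ c = fun x => ∑ j ∈ Finset.range (n+1),
      (fun y => c j * iteratedDeriv j Φ (y + (-a))) x from rfl]
  rw [iterD_sum _ _ hsm i x]
  refine Finset.sum_congr rfl fun j _ => ?_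
  have h2 : ContDiff ℝ (⊤ : ℕ∞) (fun y => iteratedDeriv j Φ (y + (-a))) :=
    (smooth_iterD j hΦ).comp (contDiff_id.add contDiff_const)
  rw [iterD_cmul i (c j) h2 x]
  congr 1
  have h3 := iteratedDeriv_comp_add_const i (iteratedDeriv j Φ) (-a)
  rw [show (fun y => iteratedDeriv j Φ (y + (-a))) = (fun z => (iteratedDeriv j Φ) (z + (-a))) from rfl, h3]
  rw [iterD_iterD]

lemma Fc_iterD_at_a (hΦsm : ContDiff ℝ (⊤ : ℕ∞) Φ) (c : ℕ → ℂ) (i : ℕ) :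
    iteratedDeriv i (Fc n a Φ c) a
      = ∑ j ∈ Finset.range (n+1), c j * iteratedDeriv (i + j) Φ 0 := by
  rw [Fc_iterD n a Φ hΦsm c i a]
  simp

/-- Triangular lemma: vanishing of the first `K` derivatives at `a` kills top coefficients. -/
lemma tri_lemma (hΦzero : ∀ j < n, iteratedDeriv j Φ 0 = 0)
    (hΦnorm : iteratedDeriv n Φ 0 = 1) (c : ℕ → ℂ) (K : ℕ)
    (hvan : ∀ i < K, ∑ j ∈ Finset.range (n+1), c j * iteratedDeriv (i + j) Φ 0 = 0) :
    ∀ j < n + 1, n < j + K → c j = 0 := by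
  have key : ∀ m : ℕ, ∀ j < n + 1, n - j = m → n < j + K → c j = 0 := by
    intro m
    induction m using Nat.strong_induction_on with
    | _ m ihm =>
      intro j hj hjm hjK
      have hjn : j ≤ n := Nat.lt_succ_iff.mp hj
      have hiK : n - j < K := by omega
      have h1 := hvan (n - j) hiK
      have h2 : ∀ b ∈ Finset.range (n+1), b ≠ j → c b * iteratedDeriv (n - j + b) Φ 0 = 0 := by
        intro b hb hbj
        rcases lt_or_gt_of_ne hbj with hlt | hgt
        · have : (n - j) + b < n := by omega
          rw [hΦzero _ this, mul_zero]
        · have hb' : b < n + 1 := Finset.mem_range.mp hb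
          have : c b = 0 := ihm (n - b) (by omega) b hb' rfl (by omega)
          rw [this, zero_mul]
      rw [Finset.sum_eq_single_of_mem j (Finset.mem_range.mpr hj) h2] at h1
      rw [show n - j + j = n by omega, hΦnorm, mul_one] at h1
      exact h1
  intro j hj hjK
  exact key (n - j) j hj rfl hjK

end ctx

section ctx
variable (n : ℕ) (l : List ℂ) (a b : ℝ) (Φ : ℝ → ℂ)
variable (hl : l.length = n + 1) (hΦmem : Φ ∈ ExpPoly l)
    (hΦzero : ∀ j < n, iteratedDeriv j Φ 0 = 0) (hΦnorm : iteratedDeriv n Φ 0 = 1)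
    (hab : a ≠ b)

set_option linter.unusedSectionVars false



include hΦzero hΦnorm in
lemma detM_ne_zero :
    (Matrix.of fun i j : Fin (n+1) => iteratedDeriv ((i:ℕ)+(j:ℕ)) Φ 0).det ≠ 0 := by
  classical
  set M : Matrix (Fin (n+1)) (Fin (n+1)) ℂ :=
    Matrix.of fun i j : Fin (n+1) => iteratedDeriv ((i:ℕ)+(j:ℕ)) Φ 0 with hM
  have htri : (M.submatrix id ⇑Fin.revPerm).BlockTriangular OrderDual.toDual := by
    intro i j hij
    have hij' : (i:ℕ) < (j:ℕ) := hij
    have hrev : ((Fin.revPerm j : Fin (n+1)) : ℕ) = n - (j:ℕ) := by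
      simp [Fin.revPerm, Fin.val_rev]
    show iteratedDeriv ((i:ℕ) + ((Fin.revPerm j : Fin (n+1)) : ℕ)) Φ 0 = 0
    rw [hrev]
    apply hΦzero
    have := j.isLt
    omega
  have hdet1 : (M.submatrix id ⇑Fin.revPerm).det = 1 := by
    rw [Matrix.det_of_lowerTriangular _ htri]
    apply Finset.prod_eq_one
    intro i _
    show iteratedDeriv ((i:ℕ) + ((Fin.revPerm i : Fin (n+1)) : ℕ)) Φ 0 = 1
    have hrev : ((Fin.revPerm i : Fin (n+1)) : ℕ) = n - (i:ℕ) := by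
      simp [Fin.revPerm, Fin.val_rev]
    rw [hrev, show (i:ℕ) + (n - (i:ℕ)) = n by have := i.isLt; omega, hΦnorm]
  have hperm := Matrix.det_permute' Fin.revPerm M
  rw [hdet1] at hperm
  intro h
  rw [h, mul_zero] at hperm
  exact (one_ne_zero : (1:ℂ) ≠ 0) hperm

include hl hΦmem hΦzero hΦnorm in
lemma exists_repr (f : ℝ → ℂ) (hf : f ∈ ExpPoly l) :
    ∃ c : ℕ → ℂ, (∀ j, n < j → c j = 0) ∧ f = Fc n a Φ c := by
  classical
  set M : Matrix (Fin (n+1)) (Fin (n+1)) ℂ :=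
    Matrix.of fun i j : Fin (n+1) => iteratedDeriv ((i:ℕ)+(j:ℕ)) Φ 0 with hM
  have hdet : IsUnit M.det := isUnit_iff_ne_zero.mpr (detM_ne_zero n Φ hΦzero hΦnorm)
  set v : Fin (n+1) → ℂ := fun i => iteratedDeriv (i:ℕ) f a with hv
  set c' : Fin (n+1) → ℂ := M⁻¹.mulVec v with hc'
  have hMc' : M.mulVec c' = v := by
    rw [hc', Matrix.mulVec_mulVec, Matrix.mul_nonsing_inv _ hdet, Matrix.one_mulVec]
  set c : ℕ → ℂ := fun j => if h : j < n + 1 then c' ⟨j, h⟩ else 0 with hc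
  refine ⟨c, fun j hj => dif_neg (by omega), ?_⟩
  have hg : (fun x => f x - Fc n a Φ c x) = 0 := by
    apply expPoly_eq_zero (ExpPoly.sub_mem hf (Fc_mem n l a Φ hΦmem c)) a
    intro j hj
    rw [hl] at hj
    have hsub : iteratedDeriv j (fun x => f x - Fc n a Φ c x) a
        = iteratedDeriv j f a - iteratedDeriv j (Fc n a Φ c) a := by
      have hf1 := hf.1
      have hf2 := (Fc_mem n l a Φ hΦmem c).1
      have hfd : ContDiffOn ℝ j f Set.univ := (hf1.of_le (by exact_mod_cast le_top)).contDiffOn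
      have hgd : ContDiffOn ℝ j (Fc n a Φ c) Set.univ :=
        (hf2.of_le (by exact_mod_cast le_top)).contDiffOn
      have := iteratedDerivWithin_sub (Set.mem_univ a) uniqueDiffOn_univ (hfd a (Set.mem_univ a)) (hgd a (Set.mem_univ a))
      simpa [iteratedDerivWithin_univ, Pi.sub_def] using this
    rw [hsub, Fc_iterD_at_a n a Φ hΦmem.1 c j]
    have hsum : ∑ jj ∈ Finset.range (n+1), c jj * iteratedDeriv (j + jj) Φ 0
        = M.mulVec c' ⟨j, hj⟩ := by
      rw [← Fin.sum_univ_eq_sum_range (fun jj => c jj * iteratedDeriv (j + jj) Φ 0) (n+1)]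
      simp only [Matrix.mulVec, dotProduct]
      refine Finset.sum_congr rfl fun jj _ => ?_
      have hcc : c (jj : ℕ) = c' jj := by
        show (if h : (jj:ℕ) < n + 1 then c' ⟨(jj:ℕ), h⟩ else 0) = c' jj
        rw [dif_pos jj.isLt, Fin.eta]
      rw [hcc, mul_comm]
      rfl
    rw [hsum, hMc']
    show iteratedDeriv j f a - iteratedDeriv j f a = 0
    ring
  funext x
  have := congrFun hg x
  simp only [Pi.zero_apply] at this
  exact sub_eq_zero.mp this


include hl hΦmem hΦzero hΦnorm in
lemma lemA1 (k : ℕ) (hk : k ≤ n)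
    (hdet : (Matrix.of fun i j : Fin (k+1) =>
      iteratedDeriv ((i:ℕ)+(j:ℕ)) Φ (b-a)).det = 0) :
    ∃ f ∈ ExpPoly l, f ≠ 0 ∧ (∀ i < n - k, iteratedDeriv i f a = 0) ∧
      (∀ i < k + 1, iteratedDeriv i f b = 0) := by
  classical
  obtain ⟨v, hv0, hvm⟩ := (Matrix.exists_mulVec_eq_zero_iff).mpr hdet
  set c : ℕ → ℂ := fun j => if h : j < k + 1 then v ⟨j, h⟩ else 0 with hc
  have hcsup : ∀ j, k < j → c j = 0 := fun j hj => dif_neg (by omega)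
  refine ⟨Fc n a Φ c, Fc_mem n l a Φ hΦmem c, ?_, ?_, ?_⟩
  · intro h0
    have hall : ∀ i < n + 1, ∑ j ∈ Finset.range (n+1), c j * iteratedDeriv (i + j) Φ 0 = 0 := by
      intro i _
      rw [← Fc_iterD_at_a n a Φ hΦmem.1 c i, h0]
      exact iterD_zero_fun i a
    have hz := tri_lemma n Φ hΦzero hΦnorm c (n+1) hall
    apply hv0
    funext jj
    have h3 : c (jj : ℕ) = 0 := hz (jj : ℕ) (by omega) (by omega)
    have hcc : c (jj : ℕ) = v jj := by
      show (if h : (jj:ℕ) < k + 1 then v ⟨(jj:ℕ), h⟩ else 0) = v jj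
      rw [dif_pos jj.isLt, Fin.eta]
    show v jj = 0
    rw [← hcc, h3]
  · intro i hi
    rw [Fc_iterD_at_a n a Φ hΦmem.1 c i]
    apply Finset.sum_eq_zero
    intro j hj
    by_cases hjk : k < j
    · rw [hcsup j hjk, zero_mul]
    · have : i + j < n := by omega
      rw [hΦzero _ this, mul_zero]
  · intro i hi
    rw [Fc_iterD n a Φ hΦmem.1 c i b]
    have hsub : ∑ j ∈ Finset.range (n+1), c j * iteratedDeriv (i + j) Φ (b + (-a))
        = ∑ j ∈ Finset.range (k+1), c j * iteratedDeriv (i + j) Φ (b + (-a)) := by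
      refine (Finset.sum_subset (Finset.range_subset_range.mpr (by omega)) ?_).symm
      intro j _ hj
      rw [hcsup j (by simp only [Finset.mem_range] at hj; omega), zero_mul]
    rw [hsub]
    have hfin := congrFun hvm ⟨i, hi⟩
    simp only [Matrix.mulVec, dotProduct, Pi.zero_apply] at hfin
    rw [← Fin.sum_univ_eq_sum_range (fun j => c j * iteratedDeriv (i + j) Φ (b + (-a))) (k+1)]
    rw [← hfin]
    refine Finset.sum_congr rfl fun jj _ => ?_
    have hcc : c (jj : ℕ) = v jj := by
      show (if h : (jj:ℕ) < k + 1 then v ⟨(jj:ℕ), h⟩ else 0) = v jj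
      rw [dif_pos jj.isLt, Fin.eta]
    rw [hcc, mul_comm]
    rw [show b + -a = b - a from (sub_eq_add_neg b a).symm]
    rfl

include hl hΦmem hΦzero hΦnorm in
lemma lemA2 (k : ℕ) (hk : k ≤ n) (f : ℝ → ℂ) (hf : f ∈ ExpPoly l) (hf0 : f ≠ 0)
    (horda : ∀ i < n - k, iteratedDeriv i f a = 0)
    (hordb : ∀ i < k + 1, iteratedDeriv i f b = 0) :
    (Matrix.of fun i j : Fin (k+1) => iteratedDeriv ((i:ℕ)+(j:ℕ)) Φ (b-a)).det = 0 := by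
  classical
  obtain ⟨c, hcsup, hfc⟩ := exists_repr n l a Φ hl hΦmem hΦzero hΦnorm f hf
  have hck : ∀ j, k < j → c j = 0 := by
    have hvan : ∀ i < n - k, ∑ j ∈ Finset.range (n+1), c j * iteratedDeriv (i + j) Φ 0 = 0 := by
      intro i hi
      rw [← Fc_iterD_at_a n a Φ hΦmem.1 c i, ← hfc]
      exact horda i hi
    intro j hj
    by_cases hjn : j < n + 1
    · exact tri_lemma n Φ hΦzero hΦnorm c (n - k) hvan j hjn (by omega)
    · exact hcsup j (by omega)
  rw [← Matrix.exists_mulVec_eq_zero_iff]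
  refine ⟨fun j => c (j : ℕ), ?_, ?_⟩
  · intro hv
    apply hf0
    rw [hfc]
    funext x
    show ∑ j ∈ Finset.range (n+1), c j * iteratedDeriv j Φ (x + (-a)) = 0
    apply Finset.sum_eq_zero
    intro j hj
    by_cases hjk : j ≤ k
    · have := congrFun hv ⟨j, by omega⟩
      simp only [Pi.zero_apply] at this
      rw [show c j = 0 from this, zero_mul]
    · rw [hck j (by omega), zero_mul]
  · funext i
    simp only [Matrix.mulVec, dotProduct, Pi.zero_apply]
    have h1 : ∑ j : Fin (k+1), (Matrix.of fun i j : Fin (k+1) =>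
        iteratedDeriv ((i:ℕ)+(j:ℕ)) Φ (b-a)) i j * c (j : ℕ)
        = ∑ j ∈ Finset.range (k+1), c j * iteratedDeriv ((i:ℕ) + j) Φ (b + (-a)) := by
      rw [← Fin.sum_univ_eq_sum_range (fun j => c j * iteratedDeriv ((i:ℕ) + j) Φ (b + (-a))) (k+1)]
      refine Finset.sum_congr rfl fun jj _ => ?_
      rw [mul_comm, sub_eq_add_neg]
      rfl
    rw [h1]
    have h2 : ∑ j ∈ Finset.range (k+1), c j * iteratedDeriv ((i:ℕ) + j) Φ (b + (-a))
        = ∑ j ∈ Finset.range (n+1), c j * iteratedDeriv ((i:ℕ) + j) Φ (b + (-a)) := by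
      refine Finset.sum_subset (Finset.range_subset_range.mpr (by omega)) ?_
      intro j _ hj
      rw [hck j (by simpa using hj), zero_mul]
    rw [h2, ← Fc_iterD n a Φ hΦmem.1 c (i:ℕ) b, ← hfc]
    exact hordb (i : ℕ) i.isLt

include hl hΦmem hΦzero hΦnorm hab in
lemma cheb_iff_det :
    IsExtChebyshev l {a, b} ↔
      ∀ k ≤ n, (Matrix.of fun i j : Fin (k + 1) =>
        iteratedDeriv ((i : ℕ) + (j : ℕ)) Φ (b - a)).det ≠ 0 := by
  classical
  constructor
  · intro hC k hk hdet
    obtain ⟨f, hfmem, hf0, horda, hordb⟩ := lemA1 n l a b Φ hl hΦmem hΦzero hΦnorm k hk hdet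
    have hsum := hC f hfmem hf0 ({a, b} : Finset ℝ)
      (fun x => if x = a then n - k else k + 1)
      (by intro x hx; simpa using hx)
      (by
        intro x hx j hj
        rcases Finset.mem_insert.mp hx with rfl | hx
        · exact horda j (by simpa using hj)
        · rw [Finset.mem_singleton] at hx
          subst hx
          exact hordb j (by simpa [Ne.symm hab] using hj))
    rw [Finset.sum_insert (by simpa using hab), Finset.sum_singleton] at hsum
    rw [if_pos rfl, if_neg (Ne.symm hab), hl] at hsum
    omega
  · intro hdets f hfmem hf0 s m hsub hvan
    rw [hl]
    by_contra hgt
    push_neg at hgt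
    have hs2 : s ⊆ ({a, b} : Finset ℝ) := by
      intro x hx
      have := hsub hx
      simpa using this
    set α : ℕ := if a ∈ s then m a else 0 with hα
    set β : ℕ := if b ∈ s then m b else 0 with hβ
    have hsum : ∑ x ∈ s, m x = α + β := by
      have h1 : ∑ x ∈ ({a, b} : Finset ℝ), (if x ∈ s then m x else 0)
          = ∑ x ∈ ({a, b} : Finset ℝ) ∩ s, m x := Finset.sum_ite_mem _ _ _
      rw [Finset.inter_eq_right.mpr hs2] at h1
      rw [← h1, Finset.sum_insert (by simpa using hab), Finset.sum_singleton]
    have hvana : ∀ j < α, iteratedDeriv j f a = 0 := by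
      intro j hj
      by_cases has : a ∈ s
      · exact hvan a has j (by rwa [hα, if_pos has] at hj)
      · rw [hα, if_neg has] at hj; omega
    have hvanb : ∀ j < β, iteratedDeriv j f b = 0 := by
      intro j hj
      by_cases hbs : b ∈ s
      · exact hvan b hbs j (by rwa [hβ, if_pos hbs] at hj)
      · rw [hβ, if_neg hbs] at hj; omega
    have hαβ : n + 1 ≤ α + β := by omega
    by_cases hαn : α ≤ n
    · have hk : n - α ≤ n := by omega
      refine hdets (n - α) hk (lemA2 n l a b Φ hl hΦmem hΦzero hΦnorm (n - α) hk f hfmem hf0 ?_ ?_)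
      · intro i hi
        exact hvana i (by omega)
      · intro i hi
        exact hvanb i (by omega)
    · apply hf0
      apply expPoly_eq_zero hfmem a
      intro j hj
      rw [hl] at hj
      exact hvana j (by omega)


include hl hΦmem hΦzero hΦnorm hab in
lemma bern_single (hC : IsExtChebyshev l {a, b}) (k : ℕ) (hk : k ≤ n) :
    ∃ g, g ∈ ExpPoly l ∧ HasZeroOfOrder g a k ∧ HasZeroOfOrder g b (n - k) ∧
      iteratedDeriv k g a = 1 := by
  classical
  set m : ℕ := n - k with hm
  -- nontrivial kernel vector of the (m) × (m+1) system
  set R : Matrix (Fin m) (Fin (m+1)) ℂ :=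
    Matrix.of (fun i j : _ => iteratedDeriv ((i:ℕ)+(j:ℕ)) Φ (b-a)) with hR
  have hninj : ¬ Function.Injective R.mulVecLin := by
    intro hinj
    have h1 := LinearMap.finrank_le_finrank_of_injective hinj
    rw [Module.finrank_pi, Module.finrank_pi] at h1
    simp [Fintype.card_fin] at h1
  obtain ⟨x, y, hxy, hne⟩ := Function.not_injective_iff.mp hninj
  set u : Fin (m+1) → ℂ := x - y with hu
  have hu0 : u ≠ 0 := sub_ne_zero.mpr hne
  have huk : R.mulVecLin u = 0 := by
    rw [hu, map_sub, hxy, sub_self]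
  set c : ℕ → ℂ := fun j => if h : j < m + 1 then u ⟨j, h⟩ else 0 with hc
  have hcsup : ∀ j, m < j → c j = 0 := fun j hj => dif_neg (by omega)
  set f : ℝ → ℂ := Fc n a Φ c with hf
  have hfmem : f ∈ ExpPoly l := Fc_mem n l a Φ hΦmem c
  have hf0 : f ≠ 0 := by
    intro h0
    have hall : ∀ i < n + 1, ∑ j ∈ Finset.range (n+1), c j * iteratedDeriv (i + j) Φ 0 = 0 := by
      intro i _
      rw [← Fc_iterD_at_a n a Φ hΦmem.1 c i, ← hf, h0]
      exact iterD_zero_fun i a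
    have hz := tri_lemma n Φ hΦzero hΦnorm c (n+1) hall
    apply hu0
    funext jj
    have h3 : c (jj : ℕ) = 0 := hz (jj : ℕ) (by omega) (by omega)
    have hcc : c (jj : ℕ) = u jj := by
      show (if h : (jj:ℕ) < m + 1 then u ⟨(jj:ℕ), h⟩ else 0) = u jj
      rw [dif_pos jj.isLt, Fin.eta]
    show u jj = 0
    rw [← hcc, h3]
  have hva : ∀ i < k, iteratedDeriv i f a = 0 := by
    intro i hi
    rw [hf, Fc_iterD_at_a n a Φ hΦmem.1 c i]
    apply Finset.sum_eq_zero
    intro j hj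
    by_cases hjm : m < j
    · rw [hcsup j hjm, zero_mul]
    · have : i + j < n := by omega
      rw [hΦzero _ this, mul_zero]
  have hvb : ∀ i < m, iteratedDeriv i f b = 0 := by
    intro i hi
    rw [hf, Fc_iterD n a Φ hΦmem.1 c i b]
    have hsub : ∑ j ∈ Finset.range (n+1), c j * iteratedDeriv (i + j) Φ (b + (-a))
        = ∑ j ∈ Finset.range (m+1), c j * iteratedDeriv (i + j) Φ (b + (-a)) := by
      refine (Finset.sum_subset (Finset.range_subset_range.mpr (by omega)) ?_).symm
      intro j _ hj
      rw [hcsup j (by simp only [Finset.mem_range] at hj; omega), zero_mul]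
    rw [hsub]
    have hfin := congrFun huk ⟨i, hi⟩
    simp only [Matrix.mulVecLin_apply, Matrix.mulVec, dotProduct, Pi.zero_apply] at hfin
    rw [← Fin.sum_univ_eq_sum_range (fun j => c j * iteratedDeriv (i + j) Φ (b + (-a))) (m+1)]
    rw [← hfin]
    refine Finset.sum_congr rfl fun jj _ => ?_
    have hcc : c (jj : ℕ) = u jj := by
      show (if h : (jj:ℕ) < m + 1 then u ⟨(jj:ℕ), h⟩ else 0) = u jj
      rw [dif_pos jj.isLt, Fin.eta]
    rw [hcc, mul_comm]
    rw [show b + -a = b - a from (sub_eq_add_neg b a).symm]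
    rfl
  -- exact orders via least nonvanishing derivative
  have hPa : ∃ j, iteratedDeriv j f a ≠ 0 := by
    by_contra hno
    push_neg at hno
    exact hf0 (expPoly_eq_zero hfmem a (fun j _ => hno j))
  have hPb : ∃ j, iteratedDeriv j f b ≠ 0 := by
    by_contra hno
    push_neg at hno
    exact hf0 (expPoly_eq_zero hfmem b (fun j _ => hno j))
  set α := Nat.find hPa with hα
  set β := Nat.find hPb with hβ
  have hvα : ∀ j < α, iteratedDeriv j f a = 0 := fun j hj => by
    have := Nat.find_min hPa hj
    simpa using this
  have hvβ : ∀ j < β, iteratedDeriv j f b = 0 := fun j hj => by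
    have := Nat.find_min hPb hj
    simpa using this
  have hkα : k ≤ α := by
    by_contra h
    exact (Nat.find_spec hPa) (hva α (by omega))
  have hmβ : m ≤ β := by
    by_contra h
    exact (Nat.find_spec hPb) (hvb β (by omega))
  have hsum := hC f hfmem hf0 ({a, b} : Finset ℝ)
    (fun x => if x = a then α else β)
    (by intro x hx; simpa using hx)
    (by
      intro x hx j hj
      rcases Finset.mem_insert.mp hx with rfl | hx
      · exact hvα j (by simpa using hj)
      · rw [Finset.mem_singleton] at hx
        subst hx
        exact hvβ j (by simpa [Ne.symm hab] using hj))
  rw [Finset.sum_insert (by simpa using hab), Finset.sum_singleton,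
    if_pos rfl, if_neg (Ne.symm hab), hl] at hsum
  have hαk : α = k := by omega
  have hβm : β = m := by omega
  -- normalize
  set z := iteratedDeriv k f a with hz
  have hz0 : z ≠ 0 := by rw [hz, ← hαk]; exact Nat.find_spec hPa
  refine ⟨fun x => z⁻¹ * f x, ExpPoly.cmul_mem _ hfmem, ⟨?_, ?_⟩, ⟨?_, ?_⟩, ?_⟩
  · intro j hj
    rw [iterD_cmul j z⁻¹ hfmem.1 a, hva j hj, mul_zero]
  · rw [iterD_cmul k z⁻¹ hfmem.1 a, ← hz]
    exact mul_ne_zero (inv_ne_zero hz0) hz0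
  · intro j hj
    rw [iterD_cmul j z⁻¹ hfmem.1 b, hvb j hj, mul_zero]
  · rw [iterD_cmul (n-k) z⁻¹ hfmem.1 b]
    refine mul_ne_zero (inv_ne_zero hz0) ?_
    rw [← hm, ← hβm]
    exact Nat.find_spec hPb
  · rw [iterD_cmul k z⁻¹ hfmem.1 a, ← hz]
    exact inv_mul_cancel₀ hz0

include hl hΦmem hΦzero hΦnorm hab in
lemma bern_exists (hC : IsExtChebyshev l {a, b}) :
    ∃ p : ℕ → ℝ → ℂ, IsBernsteinBasis l a b p := by
  classical
  refine ⟨fun k => if h : k ≤ n then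
    Classical.choose (bern_single n l a b Φ hl hΦmem hΦzero hΦnorm hab hC k h) else 0, ?_⟩
  intro k hk
  rw [hl] at hk
  simp only [Nat.add_sub_cancel] at hk
  have hspec := Classical.choose_spec (bern_single n l a b Φ hl hΦmem hΦzero hΦnorm hab hC k hk)
  have hlen : l.length - 1 = n := by rw [hl]; omega
  simp only [hlen, dif_pos hk]
  exact hspec


include hl in
/-- expansion of `f ∈ E` in a Bernstein-like basis -/
lemma exists_repr_p (p : ℕ → ℝ → ℂ) (hp : IsBernsteinBasis l a b p)
    (f : ℝ → ℂ) (hf : f ∈ ExpPoly l) :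
    ∃ c : ℕ → ℂ, f = fun x => ∑ j ∈ Finset.range (n+1), c j * p j x := by
  classical
  have hlen : l.length - 1 = n := by omega
  have hp' : ∀ k ≤ n, p k ∈ ExpPoly l ∧ HasZeroOfOrder (p k) a k ∧
      HasZeroOfOrder (p k) b (n - k) ∧ iteratedDeriv k (p k) a = 1 := by
    intro k hk
    have := hp k (by omega)
    rwa [hlen] at this
  set P : Matrix (Fin (n+1)) (Fin (n+1)) ℂ :=
    Matrix.of (fun i j : Fin (n+1) => iteratedDeriv (i:ℕ) (p (j:ℕ)) a) with hP
  have htri : P.BlockTriangular OrderDual.toDual := by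
    intro i j hij
    have hij' : (i:ℕ) < (j:ℕ) := hij
    exact ((hp' (j:ℕ) (by omega)).2.1).1 (i:ℕ) hij'
  have hdet1 : P.det = 1 := by
    rw [Matrix.det_of_lowerTriangular _ htri]
    apply Finset.prod_eq_one
    intro i _
    exact (hp' (i:ℕ) (by omega)).2.2.2
  have hdet : IsUnit P.det := by rw [hdet1]; exact isUnit_one
  set v : Fin (n+1) → ℂ := fun i => iteratedDeriv (i:ℕ) f a with hv
  set c' : Fin (n+1) → ℂ := P⁻¹.mulVec v with hc'
  have hPc' : P.mulVec c' = v := by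
    rw [hc', Matrix.mulVec_mulVec, Matrix.mul_nonsing_inv _ hdet, Matrix.one_mulVec]
  set c : ℕ → ℂ := fun j => if h : j < n + 1 then c' ⟨j, h⟩ else 0 with hc
  refine ⟨c, ?_⟩
  have hsmem : (fun x => ∑ j ∈ Finset.range (n+1), c j * p j x) ∈ ExpPoly l := by
    apply ExpPoly.sum_mem
    intro j hj
    exact ExpPoly.cmul_mem _ ((hp' j (by simp only [Finset.mem_range] at hj; omega)).1)
  have hg : (fun x => f x - ∑ j ∈ Finset.range (n+1), c j * p j x) = 0 := by
    apply expPoly_eq_zero (ExpPoly.sub_mem hf hsmem) a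
    intro i hi
    rw [hl] at hi
    rw [iterD_sub i hf.1 hsmem.1 a]
    have hsd : iteratedDeriv i (fun x => ∑ j ∈ Finset.range (n+1), c j * p j x) a
        = ∑ j ∈ Finset.range (n+1), c j * iteratedDeriv i (p j) a := by
      rw [iterD_sum (Finset.range (n+1)) (fun j => fun x => c j * p j x)
        (fun j hj => contDiff_const.mul ((hp' j (by simp only [Finset.mem_range] at hj; omega)).1).1) i a]
      refine Finset.sum_congr rfl fun j hj => ?_
      exact iterD_cmul i (c j) ((hp' j (by simp only [Finset.mem_range] at hj; omega)).1).1 a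
    rw [hsd]
    have hsum : ∑ j ∈ Finset.range (n+1), c j * iteratedDeriv i (p j) a
        = P.mulVec c' ⟨i, hi⟩ := by
      rw [← Fin.sum_univ_eq_sum_range (fun j => c j * iteratedDeriv i (p j) a) (n+1)]
      simp only [Matrix.mulVec, dotProduct]
      refine Finset.sum_congr rfl fun jj _ => ?_
      have hcc : c (jj : ℕ) = c' jj := by
        show (if h : (jj:ℕ) < n + 1 then c' ⟨(jj:ℕ), h⟩ else 0) = c' jj
        rw [dif_pos jj.isLt, Fin.eta]
      rw [hcc, mul_comm]
      rfl
    rw [hsum, hPc']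
    show iteratedDeriv i f a - iteratedDeriv i f a = 0
    ring
  funext x
  have := congrFun hg x
  simp only [Pi.zero_apply] at this
  exact sub_eq_zero.mp this

include hl hΦmem hΦzero hΦnorm in
lemma bern_to_det (p : ℕ → ℝ → ℂ) (hp : IsBernsteinBasis l a b p) :
    ∀ k ≤ n, (Matrix.of fun i j : Fin (k + 1) =>
      iteratedDeriv ((i : ℕ) + (j : ℕ)) Φ (b - a)).det ≠ 0 := by
  classical
  intro k hk hdet
  have hlen : l.length - 1 = n := by omega
  have hp' : ∀ k ≤ n, p k ∈ ExpPoly l ∧ HasZeroOfOrder (p k) a k ∧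
      HasZeroOfOrder (p k) b (n - k) ∧ iteratedDeriv k (p k) a = 1 := by
    intro k hk
    have := hp k (by omega)
    rwa [hlen] at this
  obtain ⟨f, hfmem, hf0, horda, hordb⟩ := lemA1 n l a b Φ hl hΦmem hΦzero hΦnorm k hk hdet
  obtain ⟨c, hfc⟩ := exists_repr_p n l a b hl p hp f hfmem
  have hiter : ∀ i, iteratedDeriv i f = fun x =>
      ∑ j ∈ Finset.range (n+1), c j * iteratedDeriv i (p j) x := by
    intro i
    funext x
    rw [hfc]
    rw [iterD_sum (Finset.range (n+1)) (fun j => fun x => c j * p j x)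
      (fun j hj => contDiff_const.mul ((hp' j (by simp only [Finset.mem_range] at hj; omega)).1).1) i x]
    refine Finset.sum_congr rfl fun j hj => ?_
    exact iterD_cmul i (c j) ((hp' j (by simp only [Finset.mem_range] at hj; omega)).1).1 x
  -- claim 1: c i = 0 for i < n - k
  have hclaim1 : ∀ i, i < n - k → c i = 0 := by
    intro i
    induction i using Nat.strong_induction_on with
    | _ i ih =>
      intro hi
      have h1 : iteratedDeriv i f a = 0 := horda i hi
      rw [hiter i] at h1
      change ∑ j ∈ Finset.range (n+1), c j * iteratedDeriv i (p j) a = 0 at h1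
      rw [Finset.sum_eq_single_of_mem i (Finset.mem_range.mpr (by omega))
        (by
          intro j hj hji
          rcases lt_or_gt_of_ne hji with hlt | hgt
          · rw [ih j hlt (by omega), zero_mul]
          · rw [((hp' j (by simp only [Finset.mem_range] at hj; omega)).2.1).1 i hgt, mul_zero])] at h1
      rw [(hp' i (by omega)).2.2.2, mul_one] at h1
      exact h1
  -- claim 2: c j = 0 for n - k ≤ j ≤ n (downward induction via n - j)
  have hclaim2 : ∀ d : ℕ, ∀ j < n + 1, n - j = d → n - k ≤ j → c j = 0 := by
    intro d
    induction d using Nat.strong_induction_on with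
    | _ d ihd =>
      intro j hj hjd hjk
      have hjn : j ≤ n := by omega
      have hik : n - j < k + 1 := by omega
      have h1 : iteratedDeriv (n - j) f b = 0 := hordb (n - j) hik
      rw [hiter (n - j)] at h1
      change ∑ j' ∈ Finset.range (n+1), c j' * iteratedDeriv (n - j) (p j') b = 0 at h1
      rw [Finset.sum_eq_single_of_mem j (Finset.mem_range.mpr (by omega))
        (by
          intro j' hj' hji
          have hj'n : j' ≤ n := by simp only [Finset.mem_range] at hj'; omega
          rcases lt_or_gt_of_ne hji with hlt | hgt
          · have : n - j < n - j' := by omega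
            rw [((hp' j' hj'n).2.2.1).1 (n - j) this, mul_zero]
          · rw [ihd (n - j') (by omega) j' (by omega) rfl (by omega), zero_mul])] at h1
      have hnz : iteratedDeriv (n - j) (p j) b ≠ 0 := ((hp' j hjn).2.2.1).2
      exact (mul_eq_zero.mp h1).resolve_right hnz
  apply hf0
  rw [hfc]
  funext x
  show ∑ j ∈ Finset.range (n+1), c j * p j x = 0
  apply Finset.sum_eq_zero
  intro j hj
  have hjn : j ≤ n := by simp only [Finset.mem_range] at hj; omega
  by_cases hjk : j < n - k
  · rw [hclaim1 j hjk, zero_mul]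
  · rw [hclaim2 (n - j) j (by omega) rfl (by omega), zero_mul]



end ctx

/-- **Theorem (characterization of Bernstein bases).**
Let `Λ = (λ_0,…,λ_n) ∈ ℂ^{n+1}` and `a ≠ b` real.  Let `Φ` be the fundamental
function of `E_Λ` (the unique element with `Φ(0) = ⋯ = Φ^{(n−1)}(0) = 0`,
`Φ^{(n)}(0) = 1`).  Then the following are equivalent:
(a) there exists a Bernstein basis of `E_Λ` for `{a,b}`;
(b) `E_Λ` is an extended Chebyshev system for `{a,b}`;
(c) `Φ_{n,k}(b − a) ≠ 0` for all `k = 0,…,n`, where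
`Φ_{n,k}(x) = det (Φ^{(i+j)}(x))_{0 ≤ i,j ≤ k}`. -/
theorem bernstein_basis_characterization
    (n : ℕ) (l : List ℂ) (hl : l.length = n + 1)
    (a b : ℝ) (hab : a ≠ b) (Φ : ℝ → ℂ)
    (hΦmem : Φ ∈ ExpPoly l)
    (hΦzero : ∀ j < n, iteratedDeriv j Φ 0 = 0)
    (hΦnorm : iteratedDeriv n Φ 0 = 1) :
    ((∃ p : ℕ → ℝ → ℂ, IsBernsteinBasis l a b p) ↔ IsExtChebyshev l {a, b}) ∧
    (IsExtChebyshev l {a, b} ↔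
      ∀ k ≤ n, Matrix.det (Matrix.of fun i j : Fin (k + 1) =>
        iteratedDeriv ((i : ℕ) + (j : ℕ)) Φ (b - a)) ≠ 0) := by
  have hiff2 := cheb_iff_det n l a b Φ hl hΦmem hΦzero hΦnorm hab
  refine ⟨⟨?_, ?_⟩, hiff2⟩
  · rintro ⟨p, hp⟩
    exact hiff2.mpr (bern_to_det n l a b Φ hl hΦmem hΦzero hΦnorm p hp)
  · intro hC
    exact bern_exists n l a b Φ hl hΦmem hΦzero hΦnorm hab hC
end
end

section
/- Let c ∈ ℂ and write c + Λ_n := (c+λ_0,…,c+λ_n). If there exists a Bernstein basis p_{Λ_n,k}, k = 0,…,n, of E_{Λ_n} for a ≠ b, then there exists a Bernstein basis of E_{c+Λ_n} for a ≠ b, given by p_{c+Λ_n,k}(x) = p_{Λ_n,k}(x) e^{c(x−a)} for k = 0,…,n. -/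
open Filter Topology Set

noncomputable section

section Aux

variable (c : ℂ) (a : ℝ)

/-- The exponential weight `x ↦ e^{c(x-a)}`. -/
private def Ew : ℝ → ℂ := fun x => Complex.exp (c * ((x : ℂ) - (a : ℂ)))

private lemma Ew_hasDerivAt (x : ℝ) : HasDerivAt (Ew c a) (c * Ew c a x) x := by
  have h1 : HasDerivAt (fun x : ℝ => c * ((x : ℂ) - (a : ℂ))) c x := by
    have := (Complex.ofRealCLM.hasDerivAt (x := x)).sub_const (a : ℂ)
    simpa using this.const_mul c
  show HasDerivAt (fun x : ℝ => Complex.exp (c * ((x : ℂ) - (a : ℂ))))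
    (c * Complex.exp (c * ((x : ℂ) - (a : ℂ)))) x
  convert h1.cexp using 1; ring

private lemma Ew_contDiff : ContDiff ℝ (⊤ : ℕ∞) (Ew c a) := by
  have h1 : ContDiff ℝ (⊤ : ℕ∞) (fun x : ℝ => c * ((x : ℂ) - (a : ℂ))) :=
    contDiff_const.mul ((Complex.ofRealCLM.contDiff).sub contDiff_const)
  exact h1.cexp

private lemma Ew_ne_zero (x : ℝ) : Ew c a x ≠ 0 := Complex.exp_ne_zero _

private lemma deriv_mul_Ew {f : ℝ → ℂ} (hf : ContDiff ℝ (⊤ : ℕ∞) f) (x : ℝ) :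
    deriv (fun y => f y * Ew c a y) x = (deriv f x + c * f x) * Ew c a x := by
  rw [deriv_fun_mul (hf.differentiable (by simp) x) (Ew_hasDerivAt c a x).differentiableAt,
    (Ew_hasDerivAt c a x).deriv]
  ring

/-- The operator `f ↦ f' + c f`. -/
private def LTc : (ℝ → ℂ) → (ℝ → ℂ) := fun f x => deriv f x + c * f x

private lemma LTc_contDiff {f : ℝ → ℂ} (hf : ContDiff ℝ (⊤ : ℕ∞) f) :
    ContDiff ℝ (⊤ : ℕ∞) (LTc c f) :=
  ((contDiff_infty_iff_deriv.mp hf).2).add (contDiff_const.mul hf)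

private lemma iteratedDeriv_mul_Ew (k : ℕ) :
    ∀ f : ℝ → ℂ, ContDiff ℝ (⊤ : ℕ∞) f →
      iteratedDeriv k (fun y => f y * Ew c a y) = fun x => (LTc c)^[k] f x * Ew c a x := by
  induction k with
  | zero => intro f _; simp
  | succ k ih =>
    intro f hf
    rw [iteratedDeriv_succ']
    have : deriv (fun y => f y * Ew c a y) = fun y => LTc c f y * Ew c a y := by
      funext x; exact deriv_mul_Ew c a hf x
    rw [this, ih _ (LTc_contDiff c hf), Function.iterate_succ_apply]

private lemma iteratedDeriv_add' {f g : ℝ → ℂ} (n : ℕ) (hf : ContDiff ℝ (⊤ : ℕ∞) f)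
    (hg : ContDiff ℝ (⊤ : ℕ∞) g) (x : ℝ) :
    iteratedDeriv n (fun y => f y + g y) x = iteratedDeriv n f x + iteratedDeriv n g x := by
  simp only [← iteratedDerivWithin_univ]
  exact iteratedDerivWithin_add (Set.mem_univ x) uniqueDiffOn_univ
    ((hf.of_le (mod_cast le_top)).contDiffWithinAt (n := (n : WithTop ℕ∞))) ((hg.of_le (mod_cast le_top)).contDiffWithinAt (n := (n : WithTop ℕ∞)))

private lemma iteratedDeriv_LTc {f : ℝ → ℂ} (hf : ContDiff ℝ (⊤ : ℕ∞) f) (j : ℕ) (x : ℝ) :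
    iteratedDeriv j (LTc c f) x = iteratedDeriv (j + 1) f x + c * iteratedDeriv j f x := by
  have h1 : iteratedDeriv j (fun y => deriv f y + c * f y) x
      = iteratedDeriv j (deriv f) x + iteratedDeriv j (fun y => c * f y) x :=
    iteratedDeriv_add' j (contDiff_infty_iff_deriv.mp hf).2 (contDiff_const.mul hf) x
  have h2 : iteratedDeriv j (fun y => c * f y) x = c * iteratedDeriv j f x := by
    simp only [← iteratedDerivWithin_univ]
    have := iteratedDerivWithin_const_smul (Set.mem_univ x) uniqueDiffOn_univ
      (R := ℂ) c ((hf.of_le (mod_cast le_top)).contDiffWithinAt (n := (j : WithTop ℕ∞)))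
    simpa [smul_eq_mul] using this
  show iteratedDeriv j (fun y => deriv f y + c * f y) x = _
  rw [h1, h2, ← iteratedDeriv_succ']

private lemma iterate_LTc_eq (x₀ : ℝ) (k : ℕ) :
    ∀ f : ℝ → ℂ, ContDiff ℝ (⊤ : ℕ∞) f → (∀ j < k, iteratedDeriv j f x₀ = 0) →
      (LTc c)^[k] f x₀ = iteratedDeriv k f x₀ := by
  induction k with
  | zero => intro f _ _; simp
  | succ k ih =>
    intro f hf h0
    rw [Function.iterate_succ_apply,
      ih _ (LTc_contDiff c hf) (fun j hj => by
        rw [iteratedDeriv_LTc c hf, h0 j (by omega), h0 (j+1) (by omega)]; simp),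
      iteratedDeriv_LTc c hf, h0 k (by omega)]
    simp

private lemma iteratedDeriv_mul_Ew_eq {f : ℝ → ℂ} (hf : ContDiff ℝ (⊤ : ℕ∞) f) (x₀ : ℝ)
    (k : ℕ) (h0 : ∀ j < k, iteratedDeriv j f x₀ = 0) :
    iteratedDeriv k (fun y => f y * Ew c a y) x₀ = iteratedDeriv k f x₀ * Ew c a x₀ := by
  rw [iteratedDeriv_mul_Ew c a k f hf]
  show (LTc c)^[k] f x₀ * Ew c a x₀ = _
  rw [iterate_LTc_eq c x₀ k f hf h0]

private lemma hasZeroOfOrder_mul_Ew {f : ℝ → ℂ} (hf : ContDiff ℝ (⊤ : ℕ∞) f) (x₀ : ℝ)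
    (k : ℕ) (h : HasZeroOfOrder f x₀ k) :
    HasZeroOfOrder (fun y => f y * Ew c a y) x₀ k := by
  obtain ⟨h0, hk⟩ := h
  constructor
  · intro j hj
    rw [iteratedDeriv_mul_Ew_eq c a hf x₀ j (fun i hi => h0 i (lt_trans hi hj)),
      h0 j hj, zero_mul]
  · rw [iteratedDeriv_mul_Ew_eq c a hf x₀ k h0]
    exact mul_ne_zero hk (Ew_ne_zero c a x₀)

private lemma LOp_shift_s7 : ∀ (l : List ℂ) (f : ℝ → ℂ), ContDiff ℝ (⊤ : ℕ∞) f →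
    LOp (l.map fun z => c + z) (fun y => f y * Ew c a y) = fun x => LOp l f x * Ew c a x := by
  intro l
  induction l with
  | nil => intro f _; rfl
  | cons lam r ih =>
    intro f hf
    show LOp (r.map fun z => c + z)
        (fun x => deriv (fun y => f y * Ew c a y) x - (c + lam) * (f x * Ew c a x)) = _
    have key : (fun x => deriv (fun y => f y * Ew c a y) x - (c + lam) * (f x * Ew c a x))
        = fun x => (deriv f x - lam * f x) * Ew c a x := by
      funext x; rw [deriv_mul_Ew c a hf x]; ring
    rw [key, ih _ (((contDiff_infty_iff_deriv.mp hf).2).sub (contDiff_const.mul hf))]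
    rfl

end Aux

/-- **Proposition.** Let `c ∈ ℂ` and `c + Λ_n := (c+λ_0,…,c+λ_n)`.  If `p k`,
`k = 0,…,n`, is a Bernstein basis of `E_{Λ_n}` for `a ≠ b`, then
`x ↦ p k (x) · e^{c(x−a)}`, `k = 0,…,n`, is a Bernstein basis of `E_{c+Λ_n}`
for `a ≠ b`. -/
theorem bernstein_basis_shift (l : List ℂ) (c : ℂ) (a b : ℝ) (hab : a ≠ b)
    (p : ℕ → ℝ → ℂ) (hp : IsBernsteinBasis l a b p) :
    IsBernsteinBasis (l.map fun z => c + z) a b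
      (fun k x => p k x * Complex.exp (c * ((x : ℂ) - (a : ℂ)))) := by
  intro k hk
  rw [List.length_map] at hk
  obtain ⟨⟨hsm, hLOp⟩, hza, hzb, hnorm⟩ := hp k hk
  refine ⟨⟨hsm.mul (Ew_contDiff c a), ?_⟩, ?_, ?_, ?_⟩
  · show LOp (l.map fun z => c + z) (fun y => p k y * Ew c a y) = 0
    rw [LOp_shift_s7 c a l (p k) hsm, hLOp]
    funext x; simp
  · exact hasZeroOfOrder_mul_Ew c a hsm a k hza
  · rw [List.length_map]
    exact hasZeroOfOrder_mul_Ew c a hsm b _ hzb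
  · show iteratedDeriv k (fun y => p k y * Ew c a y) a = 1
    rw [iteratedDeriv_mul_Ew_eq c a hsm a k hza.1, hnorm]
    simp [Ew]
end
end

section
/- Suppose E_{(λ_0,…,λ_n)} and E_{(λ_0,…,λ_{n−1})} are extended Chebyshev systems for {a,b}, a ≠ b ∈ ℝ. For k = 0,…,n−1 define d_k := lim_{x↑b} (d/dx p_{(λ_0,…,λ_n),k}(x)) / p_{(λ_0,…,λ_{n−1}),k}(x); then d_k exists and d_k ≠ 0. Moreover, for k = 1,…,n−1, ((d/dx) − λ_n) p_{(λ_0,…,λ_n),k} = p_{(λ_0,…,λ_{n−1}),k−1} + d_k · p_{(λ_0,…,λ_{n−1}),k}; for k = 0, ((d/dx) − λ_n) p_{(λ_0,…,λ_n),0} = d_0 · p_{(λ_0,…,λ_{n−1}),0}; and for k = n, ((d/dx) − λ_n) p_{(λ_0,…,λ_n),n} = p_{(λ_0,…,λ_{n−1}),n−1}. -/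
open Filter Topology Set

noncomputable section

section helpers


private lemma cd_top {f : ℝ → ℂ} (hf : ContDiff ℝ (⊤:ℕ∞) f) : Differentiable ℝ f :=
  hf.differentiable (by simp)

private lemma cd_deriv {f : ℝ → ℂ} (hf : ContDiff ℝ (⊤:ℕ∞) f) : ContDiff ℝ (⊤:ℕ∞) (deriv f) :=
  (contDiff_infty_iff_deriv.mp hf).2

private lemma contDiff_T (c : ℂ) {f : ℝ → ℂ} (hf : ContDiff ℝ (⊤:ℕ∞) f) :
    ContDiff ℝ (⊤:ℕ∞) fun x => deriv f x - c * f x :=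
  (cd_deriv hf).sub (contDiff_const.mul hf)

private lemma iter_sub {f g : ℝ → ℂ} (hf : ContDiff ℝ (⊤:ℕ∞) f) (hg : ContDiff ℝ (⊤:ℕ∞) g)
    (j : ℕ) (x : ℝ) :
    iteratedDeriv j (fun y => f y - g y) x = iteratedDeriv j f x - iteratedDeriv j g x := by
  simp only [← iteratedDerivWithin_univ]
  exact iteratedDerivWithin_sub (mem_univ x) uniqueDiffOn_univ
    (hf.contDiffWithinAt.of_le (by exact_mod_cast le_top)) (hg.contDiffWithinAt.of_le (by exact_mod_cast le_top))

private lemma iter_add {f g : ℝ → ℂ} (hf : ContDiff ℝ (⊤:ℕ∞) f) (hg : ContDiff ℝ (⊤:ℕ∞) g)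
    (j : ℕ) (x : ℝ) :
    iteratedDeriv j (fun y => f y + g y) x = iteratedDeriv j f x + iteratedDeriv j g x := by
  simp only [← iteratedDerivWithin_univ]
  exact iteratedDerivWithin_add (mem_univ x) uniqueDiffOn_univ
    (hf.contDiffWithinAt.of_le (by exact_mod_cast le_top)) (hg.contDiffWithinAt.of_le (by exact_mod_cast le_top))

private lemma iter_cmul {f : ℝ → ℂ} (c : ℂ) (hf : ContDiff ℝ (⊤:ℕ∞) f) (j : ℕ) (x : ℝ) :
    iteratedDeriv j (fun y => c * f y) x = c * iteratedDeriv j f x := by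
  simp only [← iteratedDerivWithin_univ]
  exact iteratedDerivWithin_const_smul (mem_univ x) uniqueDiffOn_univ c
    (hf.contDiffWithinAt.of_le (by exact_mod_cast le_top))

private lemma iter_T (j : ℕ) (c : ℂ) {f : ℝ → ℂ} (hf : ContDiff ℝ (⊤:ℕ∞) f) (x : ℝ) :
    iteratedDeriv j (fun y => deriv f y - c * f y) x
      = iteratedDeriv (j+1) f x - c * iteratedDeriv j f x := by
  have e1 : iteratedDeriv j (fun y => deriv f y - c * f y) x
      = iteratedDeriv j (deriv f) x - iteratedDeriv j (fun y => c * f y) x :=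
    iter_sub (cd_deriv hf) (contDiff_const.mul hf) j x
  rw [e1, iter_cmul c hf j x, ← iteratedDeriv_succ']

private lemma lop_append (l₁ l₂ : List ℂ) (f : ℝ → ℂ) : LOp (l₁ ++ l₂) f = LOp l₂ (LOp l₁ f) := by
  induction l₁ generalizing f with
  | nil => rfl
  | cons c r ih => exact ih _

private lemma T_comm (c e : ℂ) {f : ℝ → ℂ} (hf : ContDiff ℝ (⊤:ℕ∞) f) :
    (fun x => deriv (fun y => deriv f y - c * f y) x - e * (deriv f x - c * f x)) =
      (fun x => deriv (fun y => deriv f y - e * f y) x - c * (deriv f x - e * f x)) := by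
  funext x
  have h1 : DifferentiableAt ℝ (deriv f) x := (cd_top (cd_deriv hf)) x
  have h2 : DifferentiableAt ℝ f x := (cd_top hf) x
  rw [deriv_fun_sub h1 (h2.const_mul c), deriv_fun_sub h1 (h2.const_mul e),
      deriv_const_mul c h2, deriv_const_mul e h2]
  ring

private lemma lop_T (l : List ℂ) (c : ℂ) : ∀ {f : ℝ → ℂ}, ContDiff ℝ (⊤:ℕ∞) f →
    LOp l (fun x => deriv f x - c * f x) = fun x => deriv (LOp l f) x - c * LOp l f x := by
  induction l with
  | nil => intro f _; rfl
  | cons e r ih =>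
    intro f hf
    show LOp r (fun x => deriv (fun y => deriv f y - c * f y) x - e * (deriv f x - c * f x)) = _
    rw [T_comm c e hf]
    exact ih (contDiff_T e hf)

private lemma lop_sub (l : List ℂ) : ∀ {f g : ℝ → ℂ}, ContDiff ℝ (⊤:ℕ∞) f → ContDiff ℝ (⊤:ℕ∞) g →
    LOp l (fun x => f x - g x) = fun x => LOp l f x - LOp l g x := by
  induction l with
  | nil => intros; rfl
  | cons c r ih =>
    intro f g hf hg
    show LOp r (fun x => deriv (fun y => f y - g y) x - c * (f x - g x)) = _
    have e : (fun x => deriv (fun y => f y - g y) x - c * (f x - g x))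
        = fun x => (deriv f x - c * f x) - (deriv g x - c * g x) := by
      funext x
      rw [deriv_fun_sub ((cd_top hf) x) ((cd_top hg) x)]
      ring
    rw [e]
    exact ih (contDiff_T c hf) (contDiff_T c hg)

private lemma lop_cmul (l : List ℂ) (c : ℂ) : ∀ {f : ℝ → ℂ}, ContDiff ℝ (⊤:ℕ∞) f →
    LOp l (fun x => c * f x) = fun x => c * LOp l f x := by
  induction l with
  | nil => intros; rfl
  | cons e r ih =>
    intro f hf
    show LOp r (fun x => deriv (fun y => c * f y) x - e * (c * f x)) = _
    have hd : (fun x => deriv (fun y => c * f y) x - e * (c * f x))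
        = fun x => c * (deriv f x - e * f x) := by
      funext x
      rw [deriv_const_mul c ((cd_top hf) x)]
      ring
    rw [hd]
    exact ih (contDiff_T e hf)

private lemma expPoly_sub {l : List ℂ} {f g : ℝ → ℂ} (hf : f ∈ ExpPoly l) (hg : g ∈ ExpPoly l) :
    (fun x => f x - g x) ∈ ExpPoly l := by
  refine ⟨hf.1.sub hg.1, ?_⟩
  rw [lop_sub l hf.1 hg.1, hf.2, hg.2]
  funext x; simp

private lemma expPoly_cmul {l : List ℂ} {f : ℝ → ℂ} (c : ℂ) (hf : f ∈ ExpPoly l) :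
    (fun x => c * f x) ∈ ExpPoly l := by
  refine ⟨contDiff_const.mul hf.1, ?_⟩
  rw [lop_cmul l c hf.1, hf.2]
  funext x; simp


private lemma lemC {f : ℝ → ℂ} {b : ℝ} (m : ℕ) (hf : ContDiff ℝ (⊤:ℕ∞) f) (hfb : f b = 0)
    (hd : Tendsto (fun x : ℝ => deriv f x / ((x:ℂ) - b)^m) (𝓝[≠] b) (𝓝 0)) :
    Tendsto (fun x : ℝ => f x / ((x:ℂ) - b)^(m+1)) (𝓝[≠] b) (𝓝 0) := by
  rw [NormedAddCommGroup.tendsto_nhds_zero] at *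
  intro ε hε
  have hε2 : 0 < ε/2 := by positivity
  have hnormpow : ∀ (j : ℕ) (x : ℝ), ‖((x:ℂ) - b)^j‖ = |x - b|^j := by
    intro j x
    rw [norm_pow, ← Complex.ofReal_sub, Complex.norm_real, Real.norm_eq_abs]
  have hb1 : ∀ᶠ x in 𝓝[≠] b, ‖deriv f x‖ ≤ ε/2 * |x - b|^m := by
    filter_upwards [hd (ε/2) hε2, self_mem_nhdsWithin] with x h1 h2
    have hxb : x ≠ b := h2
    have hpos : (0:ℝ) < |x - b|^m := by
      apply pow_pos; rwa [abs_pos, sub_ne_zero]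
    rw [norm_div, hnormpow m x, div_lt_iff₀ hpos] at h1
    linarith [h1]
  have hcd : Continuous (deriv f) := (cd_deriv hf).continuous
  have hdb : ‖deriv f b‖ ≤ ε/2 * |b - b|^m := by
    have t1 : Tendsto (fun x => ‖deriv f x‖) (𝓝[≠] b) (𝓝 ‖deriv f b‖) :=
      ((hcd.tendsto b).mono_left nhdsWithin_le_nhds).norm
    have t2 : Tendsto (fun x => ε/2 * |x - b|^m) (𝓝[≠] b) (𝓝 (ε/2 * |b - b|^m)) := by
      apply Tendsto.mono_left _ nhdsWithin_le_nhds
      exact tendsto_const_nhds.mul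
        (((continuous_abs.comp (continuous_id.sub continuous_const)).pow m).tendsto b)
    exact le_of_tendsto_of_tendsto t1 t2 hb1
  have hfull : ∀ᶠ x in 𝓝 b, ‖deriv f x‖ ≤ ε/2 * |x - b|^m := by
    rw [← nhdsNE_sup_pure b, eventually_sup]
    exact ⟨hb1, by simpa using hdb⟩
  obtain ⟨δ, hδ, hball⟩ := Metric.eventually_nhds_iff.mp hfull
  filter_upwards [mem_nhdsWithin_of_mem_nhds (Metric.ball_mem_nhds b hδ), self_mem_nhdsWithin]
    with x hx1 hx2
  have hxb : x ≠ b := hx2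
  have hxδ : |x - b| < δ := by rwa [Metric.mem_ball, Real.dist_eq] at hx1
  have hxpos : 0 < |x - b| := by rwa [abs_pos, sub_ne_zero]
  have hbound : ∀ t ∈ uIcc b x, ‖deriv f t‖ ≤ ε/2 * |x - b|^m := by
    intro t ht
    have h1 : |t - b| ≤ |x - b| := abs_sub_left_of_mem_uIcc ht
    have h2 : dist t b < δ := by rw [Real.dist_eq]; exact lt_of_le_of_lt h1 hxδ
    calc ‖deriv f t‖ ≤ ε/2 * |t - b|^m := hball h2
      _ ≤ ε/2 * |x - b|^m := by gcongr
  have hmv := Convex.norm_image_sub_le_of_norm_deriv_le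
    (fun t _ => (cd_top hf).differentiableAt)
    hbound (convex_uIcc b x) left_mem_uIcc right_mem_uIcc
  rw [hfb, sub_zero] at hmv
  have hnorm : ‖f x / ((x:ℂ) - b)^(m+1)‖ = ‖f x‖ / |x - b|^(m+1) := by
    rw [norm_div, hnormpow (m+1) x]
  rw [hnorm]
  have hfx : ‖f x‖ ≤ ε/2 * |x - b|^(m+1) := by
    calc ‖f x‖ ≤ ε/2 * |x - b|^m * ‖x - b‖ := hmv
      _ = ε/2 * |x - b|^(m+1) := by rw [Real.norm_eq_abs, pow_succ]; ring
  have hppos : 0 < |x - b|^(m+1) := pow_pos hxpos _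
  calc ‖f x‖ / |x - b|^(m+1) ≤ (ε/2 * |x - b|^(m+1)) / |x - b|^(m+1) := by gcongr
    _ = ε/2 := by field_simp
    _ < ε := by linarith
private lemma lemA (b : ℝ) (m : ℕ) : ∀ (f : ℝ → ℂ), ContDiff ℝ (⊤:ℕ∞) f →
    (∀ j < m, iteratedDeriv j f b = 0) →
    Tendsto (fun x : ℝ => f x / ((x:ℂ) - b)^m) (𝓝[≠] b)
      (𝓝 (iteratedDeriv m f b / (m.factorial : ℂ))) := by
  induction m with
  | zero =>
    intro f hf _
    simp only [pow_zero, div_one, iteratedDeriv_zero, Nat.factorial_zero, Nat.cast_one]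
    exact (hf.continuous.tendsto b).mono_left nhdsWithin_le_nhds
  | succ m ih =>
    intro f hf hz
    have hfb : f b = 0 := by simpa using hz 0 (Nat.succ_pos m)
    set L : ℂ := iteratedDeriv (m+1) f b / ((m+1).factorial : ℂ) with hL
    have hcast : ContDiff ℝ (⊤:ℕ∞) (fun x : ℝ => ((x:ℂ) - b)) :=
      (Complex.ofRealCLM.contDiff.sub contDiff_const)
    have hpow : ContDiff ℝ (⊤:ℕ∞) (fun x : ℝ => ((x:ℂ) - b)^(m+1)) := hcast.pow _
    set g : ℝ → ℂ := fun x => f x - L * ((x:ℂ) - b)^(m+1) with hgdef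
    have hg : ContDiff ℝ (⊤:ℕ∞) g := hf.sub (contDiff_const.mul hpow)
    have hder : ∀ x : ℝ, deriv g x = deriv f x - L * ((m+1) * ((x:ℂ) - b)^m) := by
      intro x
      have hpc : HasDerivAt (fun z : ℂ => (z - (b:ℂ))^(m+1))
          ((m+1 : ℕ) * ((x:ℂ) - b)^m * 1) ((x:ℝ):ℂ) := by
        simpa using ((hasDerivAt_id ((x:ℝ):ℂ)).sub_const (b:ℂ)).fun_pow (m+1)
      have hp := hpc.comp_ofReal
      simp only [mul_one] at hp
      have hLp := hp.const_mul L
      have := deriv_fun_sub ((cd_top hf) x) hLp.differentiableAt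
      rw [hgdef] at *
      rw [this, hLp.deriv]
      push_cast
      ring
    have hCd : Tendsto (fun x : ℝ => deriv g x / ((x:ℂ) - b)^m) (𝓝[≠] b) (𝓝 0) := by
      have ihd := ih (deriv f) (cd_deriv hf)
        (fun j hj => by
          rw [← iteratedDeriv_succ']
          exact hz (j+1) (Nat.succ_lt_succ hj))
      have hLm : iteratedDeriv m (deriv f) b / (m.factorial : ℂ) = L * (m+1) := by
        rw [← iteratedDeriv_succ', hL, Nat.factorial_succ]
        have h1 : ((m.factorial : ℂ)) ≠ 0 := by exact_mod_cast m.factorial_ne_zero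
        have h2 : ((m:ℂ) + 1) ≠ 0 := by
          intro h
          have := congrArg Complex.re h
          simp at this
          linarith [Nat.cast_nonneg (α := ℝ) m, this]
        push_cast
        field_simp
      have hsub := ihd.sub (tendsto_const_nhds (x := L * ((m:ℂ)+1)))
      rw [hLm] at hsub

      rw [sub_self] at hsub
      apply hsub.congr'
      filter_upwards [self_mem_nhdsWithin] with x hx
      have hxb : ((x:ℂ) - b) ≠ 0 := by
        rw [sub_ne_zero]
        exact_mod_cast (hx : x ≠ b)
      have hxm : ((x:ℂ) - b)^m ≠ 0 := pow_ne_zero _ hxb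
      rw [hder x]
      field_simp
    have hgb : g b = 0 := by simp [hgdef, hfb]
    have h0 := lemC m hg hgb hCd
    have hfin := h0.add (tendsto_const_nhds (x := L))
    rw [zero_add] at hfin
    apply hfin.congr'
    filter_upwards [self_mem_nhdsWithin] with x hx
    have hxb : ((x:ℂ) - b) ≠ 0 := by
      rw [sub_ne_zero]
      exact_mod_cast (hx : x ≠ b)
    have hxm : ((x:ℂ) - b)^(m+1) ≠ 0 := pow_ne_zero _ hxb
    rw [hgdef]
    field_simp
    ring

private lemma tendsto_main {b : ℝ} {m : ℕ} {N Q : ℝ → ℂ} (hN : ContDiff ℝ (⊤:ℕ∞) N)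
    (hQ : ContDiff ℝ (⊤:ℕ∞) Q) (hNb : ∀ j ≤ m, iteratedDeriv j N b = 0)
    (hQb : ∀ j < m, iteratedDeriv j Q b = 0) (hQm : iteratedDeriv m Q b ≠ 0) (d : ℂ) :
    Tendsto (fun x => (N x + d * Q x) / Q x) (𝓝[<] b) (𝓝 d) := by
  have hfac : ((m.factorial : ℂ)) ≠ 0 := by exact_mod_cast m.factorial_ne_zero
  have hq0 : iteratedDeriv m Q b / (m.factorial : ℂ) ≠ 0 := div_ne_zero hQm hfac
  have tq : Tendsto (fun x : ℝ => Q x / ((x:ℂ) - b)^m) (𝓝[≠] b)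
      (𝓝 (iteratedDeriv m Q b / (m.factorial:ℂ))) := lemA b m Q hQ hQb
  have tN : Tendsto (fun x : ℝ => N x / ((x:ℂ) - b)^m) (𝓝[≠] b) (𝓝 0) := by
    have := lemA b m N hN (fun j hj => hNb j hj.le)
    rwa [hNb m le_rfl, zero_div] at this
  have tinv := tq.inv₀ hq0
  have tprod : Tendsto (fun x : ℝ => N x / ((x:ℂ) - b)^m * (Q x / ((x:ℂ) - b)^m)⁻¹ + d)
      (𝓝[≠] b) (𝓝 d) := by
    have := (tN.mul tinv).add (tendsto_const_nhds (x := d))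
    simpa using this
  have hqne : ∀ᶠ x in 𝓝[≠] b, Q x ≠ 0 := by
    have hne := tq.eventually_ne hq0
    filter_upwards [hne] with x hx
    intro h
    exact hx (by rw [h, zero_div])
  have heq : (fun x : ℝ => N x / ((x:ℂ) - b)^m * (Q x / ((x:ℂ) - b)^m)⁻¹ + d)
      =ᶠ[𝓝[≠] b] fun x => (N x + d * Q x) / Q x := by
    filter_upwards [hqne, self_mem_nhdsWithin] with x h1 h2
    have hxb : ((x:ℂ) - b) ≠ 0 := by
      rw [sub_ne_zero]
      exact_mod_cast (h2 : x ≠ b)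
    have hxm : ((x:ℂ) - b)^m ≠ 0 := pow_ne_zero _ hxb
    field_simp
  exact (tprod.congr' heq).mono_left (nhdsWithin_mono b fun x hx => ne_of_lt hx)


private lemma cheb_kill {n : ℕ} (hn : 1 ≤ n) (l' : List ℂ) (hl' : l'.length = n)
    (a b : ℝ) (hab : a ≠ b) (hcheb' : IsExtChebyshev l' {a, b})
    (h : ℝ → ℂ) (hmem : h ∈ ExpPoly l') (α β : ℕ) (hsum : n ≤ α + β)
    (ha : ∀ j < α, iteratedDeriv j h a = 0) (hb : ∀ j < β, iteratedDeriv j h b = 0) :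
    ∀ x, h x = 0 := by
  classical
  by_contra hc
  push_neg at hc
  obtain ⟨x₀, hx₀⟩ := hc
  have h0 : h ≠ 0 := fun hh => hx₀ (by rw [hh]; rfl)
  have hle := hcheb' h hmem h0 {a, b} (fun x => if x = a then α else β) ?_ ?_
  · rw [Finset.sum_pair hab, if_pos rfl, if_neg hab.symm, hl'] at hle
    omega
  · intro x hx
    simpa using hx
  · intro x hx j hj
    simp only [Finset.mem_insert, Finset.mem_singleton] at hx
    rcases hx with rfl | rfl
    · refine ha j ?_
      simpa using hj
    · refine hb j ?_
      simpa [if_neg (Ne.symm hab)] using hj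

end helpers

/-- **Proposition (recursion for Bernstein bases).**  Suppose `E_{(λ_0,…,λ_n)}` and
`E_{(λ_0,…,λ_{n−1})}` are extended Chebyshev systems for `{a,b}`, `a ≠ b ∈ ℝ`,
with Bernstein bases `p` resp. `q`.  For `k = 0,…,n−1` the limits
`d_k = lim_{x↑b} (p k)'(x) / q k (x)` exist and are nonzero, and
`(d/dx − λ_n) (p k) = q (k−1) + d_k · q k` for `1 ≤ k ≤ n−1`, while for `k = 0`
the right-hand side is `d_0 · q 0`, and for `k = n` it is `q (n−1)`. -/
theorem bernstein_derivative_recursion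
    (n : ℕ) (hn : 1 ≤ n) (l' : List ℂ) (hl' : l'.length = n) (lamn : ℂ)
    (a b : ℝ) (hab : a ≠ b)
    (hcheb : IsExtChebyshev (l' ++ [lamn]) {a, b})
    (hcheb' : IsExtChebyshev l' {a, b})
    (p q : ℕ → ℝ → ℂ)
    (hp : IsBernsteinBasis (l' ++ [lamn]) a b p)
    (hq : IsBernsteinBasis l' a b q) :
    (∀ k < n, ∃ d : ℂ, d ≠ 0 ∧
      Tendsto (fun x => deriv (p k) x / q k x) (𝓝[<] b) (𝓝 d) ∧
      (k = 0 → ∀ x : ℝ, deriv (p k) x - lamn * p k x = d * q k x) ∧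
      (1 ≤ k → ∀ x : ℝ, deriv (p k) x - lamn * p k x = q (k - 1) x + d * q k x)) ∧
    (∀ x : ℝ, deriv (p n) x - lamn * p n x = q (n - 1) x) := by
  classical
  have hp' : ∀ k, k ≤ n → p k ∈ ExpPoly (l' ++ [lamn]) ∧ (∀ j < k, iteratedDeriv j (p k) a = 0) ∧
      (∀ j < n - k, iteratedDeriv j (p k) b = 0) ∧ iteratedDeriv (n - k) (p k) b ≠ 0 ∧
      iteratedDeriv k (p k) a = 1 := by
    intro k hk
    have hlen : (l' ++ [lamn]).length - 1 = n := by simp [hl']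
    obtain ⟨h1, h2, h3, h4⟩ := hp k (by rw [hlen]; exact hk)
    rw [hlen] at h3
    exact ⟨h1, h2.1, h3.1, h3.2, h4⟩
  have hq' : ∀ k, k ≤ n - 1 → q k ∈ ExpPoly l' ∧ (∀ j < k, iteratedDeriv j (q k) a = 0) ∧
      (∀ j < n - 1 - k, iteratedDeriv j (q k) b = 0) ∧ iteratedDeriv (n - 1 - k) (q k) b ≠ 0 ∧
      iteratedDeriv k (q k) a = 1 := by
    intro k hk
    obtain ⟨h1, h2, h3, h4⟩ := hq k (by rw [hl']; exact hk)
    rw [hl'] at h3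
    exact ⟨h1, h2.1, h3.1, h3.2, h4⟩
  have hpsm : ∀ k, k ≤ n → ContDiff ℝ (⊤:ℕ∞) (p k) := fun k hk => ((hp' k hk).1).1
  have hqsm : ∀ k, k ≤ n - 1 → ContDiff ℝ (⊤:ℕ∞) (q k) := fun k hk => ((hq' k hk).1).1
  have hgsm : ∀ k, k ≤ n → ContDiff ℝ (⊤:ℕ∞) (fun x => deriv (p k) x - lamn * p k x) :=
    fun k hk => contDiff_T lamn (hpsm k hk)
  have hgmem : ∀ k, k ≤ n → (fun x => deriv (p k) x - lamn * p k x) ∈ ExpPoly l' := by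
    intro k hk
    refine ⟨hgsm k hk, ?_⟩
    have h1 : LOp (l' ++ [lamn]) (p k) = 0 := ((hp' k hk).1).2
    rw [lop_append] at h1
    rw [lop_T l' lamn (hpsm k hk)]
    exact h1
  have hgd : ∀ k, k ≤ n → ∀ (j : ℕ) (x : ℝ),
      iteratedDeriv j (fun y => deriv (p k) y - lamn * p k y) x =
        iteratedDeriv (j+1) (p k) x - lamn * iteratedDeriv j (p k) x :=
    fun k hk j x => iter_T j lamn (hpsm k hk) x
  constructor
  · intro k hk
    rcases Nat.eq_zero_or_pos k with rfl | hk1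
    · -- k = 0
      set d : ℂ := deriv (p 0) a - lamn * p 0 a with hd
      have hq0a : q 0 a = 1 := by
        have := (hq' 0 (Nat.zero_le _)).2.2.2.2
        simpa [iteratedDeriv_zero] using this
      have e1 : ∀ (j : ℕ) (x : ℝ),
          iteratedDeriv j (fun y => deriv (p 0) y - lamn * p 0 y - d * q 0 y) x
            = iteratedDeriv (j+1) (p 0) x - lamn * iteratedDeriv j (p 0) x
              - d * iteratedDeriv j (q 0) x := by
        intro j x
        have t1 : iteratedDeriv j (fun y => deriv (p 0) y - lamn * p 0 y - d * q 0 y) x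
            = iteratedDeriv j (fun y => deriv (p 0) y - lamn * p 0 y) x
              - iteratedDeriv j (fun y => d * q 0 y) x :=
          iter_sub (hgsm 0 (Nat.zero_le _)) (contDiff_const.mul (hqsm 0 (Nat.zero_le _))) j x
        have t2 : iteratedDeriv j (fun y => d * q 0 y) x = d * iteratedDeriv j (q 0) x :=
          iter_cmul d (hqsm 0 (Nat.zero_le _)) j x
        rw [t1, t2, hgd 0 (Nat.zero_le _) j x]
      have hza : ∀ j < 1, iteratedDeriv j (fun x => deriv (p 0) x - lamn * p 0 x - d * q 0 x) a = 0 := by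
        intro j hj
        obtain rfl : j = 0 := by omega
        simp only [iteratedDeriv_zero]
        rw [hq0a, mul_one, hd, sub_self]
      have hzb : ∀ j < n - 1, iteratedDeriv j (fun x => deriv (p 0) x - lamn * p 0 x - d * q 0 x) b = 0 := by
        intro j hj
        rw [e1 j b, (hp' 0 (Nat.zero_le _)).2.2.1 (j+1) (by omega),
            (hp' 0 (Nat.zero_le _)).2.2.1 j (by omega),
            (hq' 0 (Nat.zero_le _)).2.2.1 j (by omega)]
        ring
      have key := cheb_kill hn l' hl' a b hab hcheb'
        (fun x => deriv (p 0) x - lamn * p 0 x - d * q 0 x)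
        (expPoly_sub (hgmem 0 (Nat.zero_le _)) (expPoly_cmul d (hq' 0 (Nat.zero_le _)).1))
        1 (n - 1) (by omega) hza hzb
      have hiden : ∀ x : ℝ, deriv (p 0) x - lamn * p 0 x = d * q 0 x := by
        intro x
        have hx := key x
        linear_combination hx
      have hdne : d ≠ 0 := by
        intro hd0
        have hfun : (fun y => deriv (p 0) y - lamn * p 0 y) = (fun y => d * q 0 y) :=
          funext fun y => hiden y
        have e := congrArg (fun F => iteratedDeriv (n-1) F b) hfun
        rw [hgd 0 (Nat.zero_le _) (n-1) b, iter_cmul d (hqsm 0 (Nat.zero_le _)) (n-1) b] at e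
        have hn1 : n - 1 + 1 = n := by omega
        rw [hn1, (hp' 0 (Nat.zero_le _)).2.2.1 (n-1) (by omega), hd0] at e
        simp only [mul_zero, sub_zero, zero_mul] at e
        have h2 : iteratedDeriv (n - 0) (p 0) b ≠ 0 := (hp' 0 (Nat.zero_le _)).2.2.2.1
        rw [Nat.sub_zero] at h2
        exact h2 e
      have hlim : Tendsto (fun x => deriv (p 0) x / q 0 x) (𝓝[<] b) (𝓝 d) := by
        have hmain := tendsto_main (b := b) (m := n - 1)
          (N := fun x => lamn * p 0 x) (Q := q 0)
          (contDiff_const.mul (hpsm 0 (Nat.zero_le _))) (hqsm 0 (Nat.zero_le _))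
          ?_ ?_ ?_ d
        · apply hmain.congr
          intro x
          have hx : lamn * p 0 x + d * q 0 x = deriv (p 0) x := by
            linear_combination (-1 : ℂ) * hiden x
          rw [hx]
        · intro j hj
          rw [iter_cmul lamn (hpsm 0 (Nat.zero_le _)) j b,
              (hp' 0 (Nat.zero_le _)).2.2.1 j (by omega), mul_zero]
        · intro j hj
          exact (hq' 0 (Nat.zero_le _)).2.2.1 j (by omega)
        · have := (hq' 0 (Nat.zero_le _)).2.2.2.1
          rwa [Nat.sub_zero] at this
      exact ⟨d, hdne, hlim, fun _ => hiden, fun hcon => absurd hcon (by omega)⟩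
    · -- 1 ≤ k
      have hkn : k ≤ n := hk.le
      have hkn1 : k ≤ n - 1 := by omega
      have hk1n : k - 1 ≤ n - 1 := by omega
      set d : ℂ := iteratedDeriv k (fun y => deriv (p k) y - lamn * p k y) a
        - iteratedDeriv k (q (k-1)) a with hd
      have e1 : ∀ (j : ℕ) (x : ℝ),
          iteratedDeriv j (fun y => deriv (p k) y - lamn * p k y - q (k-1) y - d * q k y) x
            = iteratedDeriv (j+1) (p k) x - lamn * iteratedDeriv j (p k) x
              - iteratedDeriv j (q (k-1)) x - d * iteratedDeriv j (q k) x := by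
        intro j x
        have t1 : iteratedDeriv j (fun y => deriv (p k) y - lamn * p k y - q (k-1) y - d * q k y) x
            = iteratedDeriv j (fun y => deriv (p k) y - lamn * p k y - q (k-1) y) x
              - iteratedDeriv j (fun y => d * q k y) x :=
          iter_sub ((hgsm k hkn).sub (hqsm (k-1) hk1n)) (contDiff_const.mul (hqsm k hkn1)) j x
        have t2 : iteratedDeriv j (fun y => deriv (p k) y - lamn * p k y - q (k-1) y) x
            = iteratedDeriv j (fun y => deriv (p k) y - lamn * p k y) x
              - iteratedDeriv j (q (k-1)) x :=
          iter_sub (hgsm k hkn) (hqsm (k-1) hk1n) j x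
        have t3 : iteratedDeriv j (fun y => d * q k y) x = d * iteratedDeriv j (q k) x :=
          iter_cmul d (hqsm k hkn1) j x
        rw [t1, t2, t3, hgd k hkn j x]
      have hza : ∀ j < k + 1,
          iteratedDeriv j (fun x => deriv (p k) x - lamn * p k x - q (k-1) x - d * q k x) a = 0 := by
        intro j hj
        rw [e1 j a]
        by_cases hjk : j = k
        · rw [hjk, (hq' k hkn1).2.2.2.2, mul_one]
          have hdb : d = iteratedDeriv (k+1) (p k) a - lamn * iteratedDeriv k (p k) a
              - iteratedDeriv k (q (k-1)) a := by
            rw [hd, hgd k hkn k a]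
          linear_combination (-1 : ℂ) * hdb
        · by_cases hjk1 : j = k - 1
          · rw [hjk1]
            have hk1k : k - 1 + 1 = k := by omega
            rw [hk1k, (hp' k hkn).2.2.2.2, (hp' k hkn).2.1 (k-1) (by omega),
                (hq' (k-1) hk1n).2.2.2.2, (hq' k hkn1).2.1 (k-1) (by omega)]
            ring
          · rw [(hp' k hkn).2.1 (j+1) (by omega), (hp' k hkn).2.1 j (by omega),
                (hq' (k-1) hk1n).2.1 j (by omega), (hq' k hkn1).2.1 j (by omega)]
            ring
      have hzb : ∀ j < n - 1 - k,
          iteratedDeriv j (fun x => deriv (p k) x - lamn * p k x - q (k-1) x - d * q k x) b = 0 := by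
        intro j hj
        rw [e1 j b, (hp' k hkn).2.2.1 (j+1) (by omega), (hp' k hkn).2.2.1 j (by omega),
            (hq' (k-1) hk1n).2.2.1 j (by omega), (hq' k hkn1).2.2.1 j (by omega)]
        ring
      have key := cheb_kill hn l' hl' a b hab hcheb'
        (fun x => deriv (p k) x - lamn * p k x - q (k-1) x - d * q k x)
        (expPoly_sub (expPoly_sub (hgmem k hkn) (hq' (k-1) hk1n).1)
          (expPoly_cmul d (hq' k hkn1).1))
        (k+1) (n-1-k) (by omega) hza hzb
      have hiden : ∀ x : ℝ, deriv (p k) x - lamn * p k x = q (k-1) x + d * q k x := by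
        intro x
        have hx := key x
        linear_combination hx
      have hdne : d ≠ 0 := by
        intro hd0
        have hfun : (fun y => deriv (p k) y - lamn * p k y)
            = (fun y => q (k-1) y + d * q k y) := funext fun y => hiden y
        have e := congrArg (fun F => iteratedDeriv (n-1-k) F b) hfun
        have t4 : iteratedDeriv (n-1-k) (fun y => q (k-1) y + d * q k y) b
            = iteratedDeriv (n-1-k) (q (k-1)) b + d * iteratedDeriv (n-1-k) (q k) b := by
          have u1 : iteratedDeriv (n-1-k) (fun y => q (k-1) y + d * q k y) b
              = iteratedDeriv (n-1-k) (q (k-1)) b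
                + iteratedDeriv (n-1-k) (fun y => d * q k y) b :=
            iter_add (hqsm (k-1) hk1n) (contDiff_const.mul (hqsm k hkn1)) (n-1-k) b
          rw [u1, iter_cmul d (hqsm k hkn1) (n-1-k) b]
        rw [hgd k hkn (n-1-k) b, t4] at e
        have hnk : n - 1 - k + 1 = n - k := by omega
        rw [hnk, (hp' k hkn).2.2.1 (n-1-k) (by omega),
            (hq' (k-1) hk1n).2.2.1 (n-1-k) (by omega), hd0] at e
        simp only [mul_zero, sub_zero, zero_mul, zero_add, add_zero] at e
        exact (hp' k hkn).2.2.2.1 e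
      have hlim : Tendsto (fun x => deriv (p k) x / q k x) (𝓝[<] b) (𝓝 d) := by
        have hmain := tendsto_main (b := b) (m := n-1-k)
          (N := fun x => q (k-1) x + lamn * p k x) (Q := q k)
          ((hqsm (k-1) hk1n).add (contDiff_const.mul (hpsm k hkn))) (hqsm k hkn1)
          ?_ ?_ ((hq' k hkn1).2.2.2.1) d
        · apply hmain.congr
          intro x
          have hx : q (k-1) x + lamn * p k x + d * q k x = deriv (p k) x := by
            linear_combination (-1 : ℂ) * hiden x
          rw [hx]
        · intro j hj
          have u1 : iteratedDeriv j (fun y => q (k-1) y + lamn * p k y) b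
              = iteratedDeriv j (q (k-1)) b + iteratedDeriv j (fun y => lamn * p k y) b :=
            iter_add (hqsm (k-1) hk1n) (contDiff_const.mul (hpsm k hkn)) j b
          rw [u1, iter_cmul lamn (hpsm k hkn) j b,
              (hq' (k-1) hk1n).2.2.1 j (by omega), (hp' k hkn).2.2.1 j (by omega)]
          ring
        · intro j hj
          exact (hq' k hkn1).2.2.1 j hj
      exact ⟨d, hdne, hlim, fun hcon => absurd hcon (by omega), fun _ => hiden⟩
  · -- k = n
    have hqn1 : n - 1 ≤ n - 1 := le_rfl
    have e1 : ∀ (j : ℕ) (x : ℝ),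
        iteratedDeriv j (fun y => deriv (p n) y - lamn * p n y - q (n-1) y) x
          = iteratedDeriv (j+1) (p n) x - lamn * iteratedDeriv j (p n) x
            - iteratedDeriv j (q (n-1)) x := by
      intro j x
      have t1 : iteratedDeriv j (fun y => deriv (p n) y - lamn * p n y - q (n-1) y) x
          = iteratedDeriv j (fun y => deriv (p n) y - lamn * p n y) x
            - iteratedDeriv j (q (n-1)) x :=
        iter_sub (hgsm n le_rfl) (hqsm (n-1) hqn1) j x
      rw [t1, hgd n le_rfl j x]
    have hza : ∀ j < n,
        iteratedDeriv j (fun x => deriv (p n) x - lamn * p n x - q (n-1) x) a = 0 := by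
      intro j hj
      rw [e1 j a]
      by_cases hjn : j = n - 1
      · rw [hjn]
        have h1 : n - 1 + 1 = n := by omega
        rw [h1, (hp' n le_rfl).2.2.2.2, (hp' n le_rfl).2.1 (n-1) (by omega),
            (hq' (n-1) hqn1).2.2.2.2]
        ring
      · rw [(hp' n le_rfl).2.1 (j+1) (by omega), (hp' n le_rfl).2.1 j (by omega),
            (hq' (n-1) hqn1).2.1 j (by omega)]
        ring
    have hzb : ∀ j < 0,
        iteratedDeriv j (fun x => deriv (p n) x - lamn * p n x - q (n-1) x) b = 0 := by
      intro j hj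
      exact absurd hj (by omega)
    have key := cheb_kill hn l' hl' a b hab hcheb'
      (fun x => deriv (p n) x - lamn * p n x - q (n-1) x)
      (expPoly_sub (hgmem n le_rfl) (hq' (n-1) hqn1).1) n 0 (by omega) hza hzb
    intro x
    have hx := key x
    linear_combination hx
end
end

section
/- Suppose E_{(λ_0,…,λ_{n−1},λ_n)}, E_{(λ_0,…,λ_{n−1},η_n)} and E_{(λ_0,…,λ_{n−1})} are extended Chebyshev systems for {a,b}, a ≠ b ∈ ℝ. If for some fixed k ∈ {0,…,n} the Bernstein basis functions satisfy p_{(λ_0,…,λ_{n−1},λ_n),k}(x) = p_{(λ_0,…,λ_{n−1},η_n),k}(x) for all x ∈ (a,b), then λ_n = η_n. -/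
open Filter Topology Set

noncomputable section

lemma LOp_contDiff (l : List ℂ) (f : ℝ → ℂ) (hf : ContDiff ℝ (⊤ : ℕ∞) f) :
    ContDiff ℝ (⊤ : ℕ∞) (LOp l f) := by
  induction l generalizing f with
  | nil => exact hf
  | cons c r ih =>
    exact ih _ (((contDiff_infty_iff_deriv.mp hf).2).sub (contDiff_const.mul hf))

lemma LOp_congr_on (l : List ℂ) {s : Set ℝ} (hs : IsOpen s) (f g : ℝ → ℂ)
    (h : ∀ x ∈ s, f x = g x) : ∀ x ∈ s, LOp l f x = LOp l g x := by
  induction l generalizing f g with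
  | nil => exact h
  | cons c r ih =>
    apply ih
    intro x hx
    have hd : deriv f x = deriv g x :=
      Filter.EventuallyEq.deriv_eq (by filter_upwards [hs.mem_nhds hx] using h)
    simp only [hd, h x hx]

lemma LOp_append (l : List ℂ) (c : ℂ) (f : ℝ → ℂ) :
    LOp (l ++ [c]) f = fun x => deriv (LOp l f) x - c * LOp l f x := by
  induction l generalizing f with
  | nil => rfl
  | cons d r ih => exact ih _

lemma ode_zero (c : ℂ) (u : ℝ → ℂ) (hu : Differentiable ℝ u)
    (hde : ∀ x, deriv u x = c * u x) (x₀ : ℝ) (h0 : u x₀ = 0) : ∀ x, u x = 0 := by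
  set w : ℝ → ℂ := fun x => Complex.exp (-(c * x)) * u x with hw
  have hwd : ∀ x, HasDerivAt w 0 x := by
    intro x
    have h1 : HasDerivAt (fun y : ℝ => -(c * (y : ℂ))) (-c) x := by
      exact (((hasDerivAt_id x).ofReal_comp).const_mul c).neg.congr_deriv (by simp)
    have h2 : HasDerivAt (fun y : ℝ => Complex.exp (-(c * y))) (Complex.exp (-(c * x)) * (-c)) x :=
      h1.cexp
    have h3 : HasDerivAt u (c * u x) x := by
      have := (hu x).hasDerivAt
      rwa [hde x] at this
    have := h2.mul h3
    exact this.congr_deriv (by ring)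
  have hconst : ∀ x, w x = w x₀ :=
    fun x => is_const_of_deriv_eq_zero (fun y => (hwd y).differentiableAt)
      (fun y => (hwd y).deriv) x x₀
  intro x
  have : w x = 0 := by rw [hconst x, hw]; simp [h0]
  have hne : Complex.exp (-(c * x)) ≠ 0 := Complex.exp_ne_zero _
  rw [hw] at this
  simpa [hne] using this

/-- **Proposition.** Suppose `E_{(λ_0,…,λ_{n−1},λ_n)}`, `E_{(λ_0,…,λ_{n−1},η_n)}` and
`E_{(λ_0,…,λ_{n−1})}` are extended Chebyshev systems for `{a,b}`, `a ≠ b ∈ ℝ`.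
If for some fixed `k ∈ {0,…,n}` the Bernstein basis functions satisfy
`p_{(λ_0,…,λ_{n−1},λ_n),k} = p_{(λ_0,…,λ_{n−1},η_n),k}` on the open interval
between `a` and `b`, then `λ_n = η_n`. -/
theorem eigenvalue_determined_by_bernstein_function
    (n : ℕ) (l' : List ℂ) (hl' : l'.length = n) (lamn etan : ℂ)
    (a b : ℝ) (hab : a ≠ b)
    (h1 : IsExtChebyshev (l' ++ [lamn]) {a, b})
    (h2 : IsExtChebyshev (l' ++ [etan]) {a, b})
    (h3 : IsExtChebyshev l' {a, b})
    (p q : ℕ → ℝ → ℂ)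
    (hp : IsBernsteinBasis (l' ++ [lamn]) a b p)
    (hq : IsBernsteinBasis (l' ++ [etan]) a b q)
    (k : ℕ) (hk : k ≤ n)
    (heq : ∀ x ∈ Set.uIoo a b, p k x = q k x) :
    lamn = etan := by
  classical
  have hkl : k ≤ (l' ++ [lamn]).length - 1 := by simp [hl', hk]
  have hkl2 : k ≤ (l' ++ [etan]).length - 1 := by simp [hl', hk]
  obtain ⟨hpE, hpa, hpb, hpn⟩ := hp k hkl
  obtain ⟨hqE, hqa, hqb, hqn⟩ := hq k hkl2
  set u : ℝ → ℂ := LOp l' (p k) with hu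
  set v : ℝ → ℂ := LOp l' (q k) with hv
  have hud : ∀ x, deriv u x = lamn * u x := by
    intro x
    have := congrFun hpE.2 x
    rw [LOp_append] at this
    have : deriv u x - lamn * u x = 0 := this
    linear_combination this
  have hvd : ∀ x, deriv v x = etan * v x := by
    intro x
    have := congrFun hqE.2 x
    rw [LOp_append] at this
    have : deriv v x - etan * v x = 0 := this
    linear_combination this
  have husm : ContDiff ℝ (⊤ : ℕ∞) u := LOp_contDiff l' _ hpE.1
  have hop : IsOpen (Set.uIoo a b) := isOpen_Ioo
  have hne : (Set.uIoo a b).Nonempty := by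
    refine Set.nonempty_Ioo.mpr ?_
    exact min_lt_max.mpr hab
  -- u and v agree on the open interval
  have huv : ∀ x ∈ Set.uIoo a b, u x = v x := LOp_congr_on l' hop _ _ heq
  -- claim: u does not vanish on the whole interval
  have hex : ∃ x ∈ Set.uIoo a b, u x ≠ 0 := by
    by_contra hcon
    push_neg at hcon
    obtain ⟨x₀, hx₀⟩ := hne
    have huz : ∀ x, u x = 0 :=
      ode_zero lamn u (husm.differentiable (by simp)) hud x₀ (hcon x₀ hx₀)
    have hpE' : p k ∈ ExpPoly l' := ⟨hpE.1, funext fun x => huz x⟩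
    have hiz : ∀ m : ℕ, iteratedDeriv m (0 : ℝ → ℂ) = 0 := by
      intro m
      induction m with
      | zero => simp [iteratedDeriv_zero]
      | succ m ih =>
        rw [iteratedDeriv_succ, ih]
        funext x
        show deriv (fun _ : ℝ => (0 : ℂ)) x = 0
        simp
    have hpk0 : p k ≠ 0 := by
      intro h
      rw [h, hiz k] at hpn
      simpa using hpn
    rcases Nat.eq_zero_or_pos n with hn0 | hn
    · -- n = 0 : l' = [], so u = p k and p k = 0, contradiction
      have hl0 : l' = [] := List.length_eq_zero_iff.mp (hl'.trans hn0)
      apply hpk0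
      funext x
      have := huz x
      rw [hu, hl0] at this
      exact this
    · -- n ≥ 1 : use Chebyshev for l'
      have hsum := h3 (p k) hpE' hpk0 {a, b} (fun x => if x = a then k else n - k)
        (by intro x hx; simpa using hx)
        (by
          intro x hx j hj
          simp only [Finset.mem_insert, Finset.mem_singleton] at hx
          rcases hx with rfl | rfl
          · simp only [if_pos rfl] at hj
            exact hpa.1 j hj
          · simp only [if_neg hab.symm] at hj
            apply hpb.1
            simpa [hl'] using hj)
      rw [Finset.sum_pair hab] at hsum
      rw [if_pos rfl, if_neg hab.symm] at hsum
      rw [hl'] at hsum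
      omega
  obtain ⟨x, hx, hux⟩ := hex
  have hdeq : deriv u x = deriv v x :=
    Filter.EventuallyEq.deriv_eq (by filter_upwards [hop.mem_nhds hx] using huv)
  have : lamn * u x = etan * u x := by
    rw [← hud x, hdeq, hvd x, ← huv x hx]
  exact mul_right_cancel₀ hux this
end
end
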